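/- arXiv:math-ph/0404002 — 4 statements merged into one kernel-verified Lean document; each statement's English description precedes it below -/
import Mathlib

section
/- For every legless basis multigraph G with vertex set V(G) = {1,…,R}, one has in 𝒢̃ the identity ΔG = 2·Σ_{1≤i<j≤R} {i,j}·G − 2R·Σ_{i=1}^R {i,R+1}·G + R(R+1)·{R+1,R+2}·G, where {i,j}·G denotes G with one extra edge {i,j}. -/
open Finset
open scoped Classical

/-- A vertex set of an edge (two distinct positive integers) or a leg (one positive integer). -/
abbrev EdgeOrLeg : Type := {s : Finset ℕ+ // s.card = 1 ∨ s.card = 2}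

/-- A multigraph: a finitely supported multiplicity function on edges and legs. -/
abbrev Multigraph : Type := EdgeOrLeg →₀ ℕ

/-- The complex vector space (indeed algebra) with basis the multigraphs. -/
abbrev GAlg : Type := AddMonoidAlgebra ℂ Multigraph

/-- The singleton `{v}` viewed as a leg. -/
def legSet (v : ℕ+) : EdgeOrLeg := ⟨{v}, Or.inl (Finset.card_singleton v)⟩

/-- The element of the overlap algebra given by a single edge `{v,w}` (`v ≠ w`);
a degenerate edge at a single vertex counts as the factor `1`. -/
noncomputable def edgeElem (v w : ℕ+) : GAlg :=
  if h : v = w then 1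
  else AddMonoidAlgebra.single (Finsupp.single ⟨{v, w}, Or.inr (Finset.card_pair h)⟩ 1) 1

/-- The vertex set of a multigraph. -/
def VG (G : Multigraph) : Finset ℕ+ := G.support.biUnion fun s => s.1

/-- A multigraph is legless when every element of its support is an edge. -/
def Legless (G : Multigraph) : Prop := ∀ s ∈ G.support, s.1.card = 2

/-- The multiset of legs (counted with multiplicity) of a multigraph. -/
def legMultiset (G : Multigraph) : Multiset ℕ+ :=
  G.sum fun s n => if s.1.card = 1 then n • s.1.val else 0

/-- The edge part of a multigraph (forget all legs). -/
noncomputable def edgePart (G : Multigraph) : Multigraph :=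
  G.filter fun s => s.1.card = 2

/-- Sum over all perfect pairings (fixed-point free involutions) of the entries of
a list `l` of vertices, of the product of the edges joining paired entries. -/
noncomputable def pairingSum (l : List ℕ+) : GAlg :=
  ∑ π ∈ Finset.univ.filter
      (fun π : Equiv.Perm (Fin l.length) => ∀ i, π i ≠ i ∧ π (π i) = i),
    ∏ i ∈ Finset.univ.filter (fun i : Fin l.length => i < π i),
      edgeElem (l.get i) (l.get (π i))

/-- Wick contraction of a single multigraph: its edge part times the sum over all
perfect pairings of its multiset of legs of the products of the resulting edges.
(If the number of legs is odd there are no pairings and the result is `0`.) -/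
noncomputable def wickBasis (G : Multigraph) : GAlg :=
  AddMonoidAlgebra.single (edgePart G) 1 * pairingSum (legMultiset G).toList

/-- The Wick contraction operator `C` on the overlap algebra. -/
noncomputable def Cop : Module.End ℂ GAlg :=
  (Finsupp.lsum ℂ fun G => LinearMap.toSpanSingleton ℂ GAlg (wickBasis G)) ∘ₗ
    (AddMonoidAlgebra.coeffLinearEquiv ℂ).toLinearMap

/-- Adding one leg at vertex `v` to a multigraph, i.e. the product `{v}·G`. -/
noncomputable def addLeg (v : ℕ+) (G : Multigraph) : Multigraph := Finsupp.single (legSet v) 1 + G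

/-- The smallest positive integer not belonging to `V(G)`. -/
noncomputable def fresh (G : Multigraph) : ℕ+ :=
  ⟨sInf {n : ℕ | 0 < n ∧ ∀ v ∈ VG G, (v : ℕ) ≠ n}, by
    have hne : {n : ℕ | 0 < n ∧ ∀ v ∈ VG G, (v : ℕ) ≠ n}.Nonempty := by
      refine ⟨(VG G).sup (fun v => (v : ℕ)) + 1, Nat.succ_pos _, fun v hv => ?_⟩
      have h2 : (v : ℕ) ≤ (VG G).sup (fun v => (v : ℕ)) := Finset.le_sup hv
      omega
    exact (Nat.sInf_mem hne).1⟩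

/-- The operator `δ` on a basis multigraph. -/
noncomputable def gdeltaBasis (G : Multigraph) : GAlg :=
  (∑ v ∈ VG G, AddMonoidAlgebra.single (addLeg v G) 1)
    - ((VG G).card : ℂ) • AddMonoidAlgebra.single (addLeg (fresh G) G) 1

/-- The Gaussian operator `δ` on the overlap algebra. -/
noncomputable def gdelta : Module.End ℂ GAlg :=
  (Finsupp.lsum ℂ fun G => LinearMap.toSpanSingleton ℂ GAlg (gdeltaBasis G)) ∘ₗ
    (AddMonoidAlgebra.coeffLinearEquiv ℂ).toLinearMap

/-- `Δ := C ∘ δ ∘ δ`. -/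
noncomputable def DeltaOp : Module.End ℂ GAlg := Cop * gdelta * gdelta

/-- The subspace `𝒢̃''` spanned by the legless multigraphs. -/
noncomputable def leglessSpan : Submodule ℂ GAlg :=
  Submodule.span ℂ {x : GAlg | ∃ G : Multigraph, Legless G ∧ x = AddMonoidAlgebra.single G 1}

lemma Cop_single (H : Multigraph) (c : ℂ) :
    Cop (AddMonoidAlgebra.single H c) = c • wickBasis H := by
  show (Finsupp.lsum ℂ fun G => LinearMap.toSpanSingleton ℂ GAlg (wickBasis G))
    (Finsupp.single H c) = c • wickBasis H
  rw [Finsupp.lsum_single]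
  rfl

lemma gdelta_single (H : Multigraph) (c : ℂ) :
    gdelta (AddMonoidAlgebra.single H c) = c • gdeltaBasis H := by
  show (Finsupp.lsum ℂ fun G => LinearMap.toSpanSingleton ℂ GAlg (gdeltaBasis G))
    (Finsupp.single H c) = c • gdeltaBasis H
  rw [Finsupp.lsum_single]
  rfl
lemma support_addLeg (v : ℕ+) (G : Multigraph) :
    (addLeg v G).support = insert (legSet v) G.support := by
  ext s
  rcases eq_or_ne s (legSet v) with h | h
  · subst h; simp [addLeg, Finsupp.add_apply, Finsupp.single_apply]
  · simp [addLeg, Finsupp.add_apply, Finsupp.single_apply, Ne.symm h, h]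

lemma VG_addLeg (v : ℕ+) (G : Multigraph) : VG (addLeg v G) = insert v (VG G) := by
  unfold VG
  rw [support_addLeg, Finset.biUnion_insert]
  show ({v} : Finset ℕ+) ∪ _ = _
  rw [← Finset.insert_eq]

lemma fresh_eq (G : Multigraph) (R : ℕ) (hV : VG G = (range R).image Nat.succPNat) :
    fresh G = R.succPNat := by
  have key : sInf {n : ℕ | 0 < n ∧ ∀ v ∈ VG G, (v : ℕ) ≠ n} = R + 1 := by
    have hmem : R + 1 ∈ {n : ℕ | 0 < n ∧ ∀ v ∈ VG G, (v : ℕ) ≠ n} := by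
      refine ⟨Nat.succ_pos _, fun v hv => ?_⟩
      rw [hV] at hv
      obtain ⟨i, hi, rfl⟩ := Finset.mem_image.1 hv
      rw [Finset.mem_range] at hi
      simp only [Nat.succPNat_coe]
      omega
    have h1 : sInf {n : ℕ | 0 < n ∧ ∀ v ∈ VG G, (v : ℕ) ≠ n} ≤ R + 1 := Nat.sInf_le hmem
    have h2 := Nat.sInf_mem ⟨_, hmem⟩
    obtain ⟨hpos, hall⟩ := h2
    set m := sInf {n : ℕ | 0 < n ∧ ∀ v ∈ VG G, (v : ℕ) ≠ n} with hm
    by_contra hne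
    have hmR : m ≤ R := by omega
    have : (⟨m, hpos⟩ : ℕ+) ∈ VG G := by
      rw [hV]
      exact Finset.mem_image.2 ⟨m - 1, Finset.mem_range.2 (by omega), by
        ext; simp [Nat.succPNat]; omega⟩
    exact hall _ this rfl
  have : (fresh G : ℕ) = R + 1 := key
  exact PNat.coe_injective (by simp [this])

lemma card_VG (G : Multigraph) (R : ℕ) (hV : VG G = (range R).image Nat.succPNat) :
    (VG G).card = R := by
  rw [hV, Finset.card_image_of_injective _ Nat.succPNat_injective, Finset.card_range]
lemma legMultiset_add (G H : Multigraph) :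
    legMultiset (G + H) = legMultiset G + legMultiset H := by
  unfold legMultiset
  refine Finsupp.sum_add_index (fun s _ => ?_) (fun s _ n m => ?_)
  · simp
  · split_ifs <;> simp [add_smul]

lemma legMultiset_addLeg (v : ℕ+) (G : Multigraph) :
    legMultiset (addLeg v G) = v ::ₘ legMultiset G := by
  rw [addLeg, legMultiset_add]
  have : legMultiset (Finsupp.single (legSet v) 1) = {v} := by
    unfold legMultiset
    rw [Finsupp.sum_single_index (by simp)]
    simp [legSet]
  rw [this]
  rfl

lemma legMultiset_legless (G : Multigraph) (hG : Legless G) : legMultiset G = 0 := by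
  unfold legMultiset
  apply Finset.sum_eq_zero
  intro s hs
  simp [hG s hs]

lemma edgePart_addLeg (v : ℕ+) (G : Multigraph) : edgePart (addLeg v G) = edgePart G := by
  ext s
  rw [edgePart, edgePart, Finsupp.filter_apply, Finsupp.filter_apply]
  split_ifs with h
  · rw [addLeg, Finsupp.add_apply, Finsupp.single_apply,
      if_neg (fun he => by rw [← he] at h; simp [legSet] at h), zero_add]
  · rfl

lemma edgePart_legless (G : Multigraph) (hG : Legless G) : edgePart G = G := by
  unfold edgePart
  exact (Finsupp.filter_eq_self_iff _ _).2
    (fun s hs => hG s (Finsupp.mem_support_iff.2 hs))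
lemma edgeElem_comm (v w : ℕ+) : edgeElem v w = edgeElem w v := by
  unfold edgeElem
  rcases eq_or_ne v w with h | h
  · subst h; rfl
  · rw [dif_neg h, dif_neg (Ne.symm h)]
    have h2 : (⟨{v,w}, Or.inr (Finset.card_pair h)⟩ : EdgeOrLeg)
        = ⟨{w,v}, Or.inr (Finset.card_pair (Ne.symm h))⟩ :=
      Subtype.ext (Finset.pair_comm v w)
    rw [h2]

lemma pairingSum_pair (u w : ℕ+) : pairingSum [u, w] = edgeElem u w := by
  have h0 : pairingSum [u,w] = ∑ π ∈ Finset.univ.filter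
      (fun π : Equiv.Perm (Fin 2) => ∀ i, π i ≠ i ∧ π (π i) = i),
      ∏ i ∈ Finset.univ.filter (fun i : Fin 2 => i < π i),
        edgeElem ([u,w].get i) ([u,w].get (π i)) := rfl
  rw [h0]
  have hfilt : (Finset.univ.filter
      (fun π : Equiv.Perm (Fin 2) => ∀ i, π i ≠ i ∧ π (π i) = i))
      = {Equiv.swap 0 1} := by decide
  rw [hfilt, Finset.sum_singleton]
  have hfilt2 : (Finset.univ.filter (fun i : Fin 2 => i < Equiv.swap 0 1 i))
      = {(0 : Fin 2)} := by decide
  rw [hfilt2, Finset.prod_singleton]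
  have h1 : Equiv.swap (0 : Fin 2) 1 0 = 1 := Equiv.swap_apply_left 0 1
  rw [h1]
  rfl
lemma eq_pair_of_perm {u w : ℕ+} {l : List ℕ+} (h : l.Perm [u, w]) :
    l = [u, w] ∨ l = [w, u] := by
  have hlen := h.length_eq
  obtain ⟨a, b, rfl⟩ : ∃ a b, l = [a, b] := by
    rcases l with _ | ⟨a, _ | ⟨b, _ | ⟨c, t⟩⟩⟩ <;> simp at hlen <;> try omega
    exact ⟨a, b, rfl⟩
  have ha : a ∈ [u, w] := h.mem_iff.1 List.mem_cons_self
  have ha2 : a = u ∨ a = w := by simpa using ha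
  rcases ha2 with h1 | h1
  · rw [h1] at h ⊢
    have hb : ([b] : List ℕ+) = [w] := List.perm_singleton.1 h.cons_inv
    exact Or.inl (by simpa using hb)
  · rw [h1] at h ⊢
    have h2 : ([w, b] : List ℕ+).Perm [w, u] := h.trans (List.Perm.swap w u [])
    have hb : ([b] : List ℕ+) = [u] := List.perm_singleton.1 h2.cons_inv
    exact Or.inr (by simpa using hb)
lemma wick_two (u w : ℕ+) (G : Multigraph) (hG : Legless G) :
    wickBasis (addLeg u (addLeg w G)) = edgeElem u w * AddMonoidAlgebra.single G 1 := by
  unfold wickBasis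
  rw [edgePart_addLeg, edgePart_addLeg, edgePart_legless G hG]
  have hleg : legMultiset (addLeg u (addLeg w G)) = (↑[u, w] : Multiset ℕ+) := by
    rw [legMultiset_addLeg, legMultiset_addLeg, legMultiset_legless G hG]
    rfl
  have hperm : (legMultiset (addLeg u (addLeg w G))).toList.Perm [u, w] := by
    rw [← Multiset.coe_eq_coe, Multiset.coe_toList, hleg]
  rcases eq_pair_of_perm hperm with h | h <;> rw [h]
  · rw [pairingSum_pair]; exact mul_comm _ _
  · rw [pairingSum_pair, edgeElem_comm w u]; exact mul_comm _ _
lemma double_sum_split {M : Type*} [AddCommMonoid M] (R : ℕ) (F : ℕ → ℕ → M) (b : M)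
    (hsymm : ∀ i j, F i j = F j i) (hdiag : ∀ i, F i i = b) :
    ∑ j ∈ range R, ∑ i ∈ range R, F i j
      = 2 • (∑ p ∈ (range R ×ˢ range R).filter (fun p => p.1 < p.2), F p.1 p.2) + R • b := by
  set S := range R ×ˢ range R with hS
  have h1 : ∑ j ∈ range R, ∑ i ∈ range R, F i j = ∑ p ∈ S, F p.1 p.2 := by
    rw [Finset.sum_product]
    exact Finset.sum_comm
  have h2 := Finset.sum_filter_add_sum_filter_not S (fun p => p.1 < p.2) (fun p => F p.1 p.2)
  have h3 := Finset.sum_filter_add_sum_filter_not (S.filter fun p => ¬ p.1 < p.2)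
    (fun p => p.2 < p.1) (fun p => F p.1 p.2)
  have e1 : (S.filter fun p => ¬ p.1 < p.2).filter (fun p => p.2 < p.1)
      = S.filter (fun p => p.2 < p.1) := by
    rw [Finset.filter_filter]
    exact Finset.filter_congr (fun p _ => by constructor <;> omega)
  have e2 : (S.filter fun p => ¬ p.1 < p.2).filter (fun p => ¬ p.2 < p.1)
      = S.filter (fun p => p.1 = p.2) := by
    rw [Finset.filter_filter]
    exact Finset.filter_congr (fun p _ => by constructor <;> omega)
  have e3 : ∑ p ∈ S.filter (fun p => p.2 < p.1), F p.1 p.2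
      = ∑ p ∈ S.filter (fun p => p.1 < p.2), F p.1 p.2 := by
    apply Finset.sum_nbij' (fun p => (p.2, p.1)) (fun p => (p.2, p.1)) <;>
      simp +contextual [hS, Finset.mem_filter, Finset.mem_product]
    intro a b hb ha hab
    exact hsymm a b
  have e4 : ∑ p ∈ S.filter (fun p => p.1 = p.2), F p.1 p.2 = R • b := by
    have him : S.filter (fun p => p.1 = p.2) = (range R).image (fun i => (i, i)) := by
      ext p
      simp only [Finset.mem_filter, Finset.mem_image, Finset.mem_product, hS, Finset.mem_range]
      constructor
      · rintro ⟨⟨h1', h2'⟩, h3'⟩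
        exact ⟨p.1, h1', by rw [Prod.ext_iff]; exact ⟨rfl, h3'⟩⟩
      · rintro ⟨i, hi, rfl⟩
        exact ⟨⟨hi, hi⟩, rfl⟩
    rw [him, Finset.sum_image (fun x _ y _ h => (Prod.ext_iff.1 h).1)]
    rw [Finset.sum_congr rfl (fun i _ => hdiag i), Finset.sum_const, Finset.card_range]
  rw [h1, ← h2, ← h3, e1, e2, e3, e4, two_smul]
  abel
lemma edgeElem_self (v : ℕ+) : edgeElem v v = 1 := by
  unfold edgeElem; rw [dif_pos rfl]

/-- For a legless basis multigraph `G` with vertex set `{1,…,R}`,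
`ΔG = 2·Σ_{1≤i<j≤R} {i,j}·G − 2R·Σ_{i=1}^R {i,R+1}·G + R(R+1)·{R+1,R+2}·G`. -/
theorem DeltaOp_apply_legless (G : Multigraph) (R : ℕ) (hG : Legless G)
    (hV : VG G = (Finset.range R).image Nat.succPNat) :
    DeltaOp (AddMonoidAlgebra.single G 1)
      = (2 : ℂ) • (∑ p ∈ (Finset.range R ×ˢ Finset.range R).filter (fun p => p.1 < p.2),
            edgeElem p.1.succPNat p.2.succPNat * AddMonoidAlgebra.single G 1)
        - ((2 * R : ℕ) : ℂ) • (∑ i ∈ Finset.range R,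
            edgeElem i.succPNat R.succPNat * AddMonoidAlgebra.single G 1)
        + ((R * (R + 1) : ℕ) : ℂ) •
            (edgeElem R.succPNat (R + 1).succPNat * AddMonoidAlgebra.single G 1) := by
  classical
  set B : GAlg := AddMonoidAlgebra.single G 1 with hB
  have hfresh : fresh G = R.succPNat := fresh_eq G R hV
  have hcard : (VG G).card = R := card_VG G R hV
  have hfnot : R.succPNat ∉ VG G := by
    rw [hV]
    intro h
    obtain ⟨i, hi, hie⟩ := Finset.mem_image.1 h
    rw [Finset.mem_range] at hi
    have := Nat.succPNat_injective hie
    omega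
  have hVf : VG (addLeg R.succPNat G) = (range (R+1)).image Nat.succPNat := by
    rw [VG_addLeg, hV, Finset.range_add_one, Finset.image_insert]
  have hCv : ∀ v ∈ VG G, Cop (gdeltaBasis (addLeg v G))
      = (∑ u ∈ VG G, edgeElem u v * B) - (R : ℂ) • (edgeElem R.succPNat v * B) := by
    intro v hv
    have hVv : VG (addLeg v G) = VG G := by rw [VG_addLeg, Finset.insert_eq_self.2 hv]
    have hfv : fresh (addLeg v G) = R.succPNat := fresh_eq _ R (by rw [hVv, hV])
    unfold gdeltaBasis
    rw [hVv, hfv, hcard, map_sub, map_sum, map_smul]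
    congr 1
    · exact Finset.sum_congr rfl fun u _ => by
        rw [Cop_single, one_smul, wick_two u v G hG]
    · rw [Cop_single, one_smul, wick_two _ v G hG]
  have hCf : Cop (gdeltaBasis (addLeg R.succPNat G))
      = B + (∑ u ∈ VG G, edgeElem u R.succPNat * B)
        - ((R + 1 : ℕ) : ℂ) • (edgeElem (R+1).succPNat R.succPNat * B) := by
    have hffresh : fresh (addLeg R.succPNat G) = (R+1).succPNat := fresh_eq _ (R+1) hVf
    have hcard' : (VG (addLeg R.succPNat G)).card = R + 1 := card_VG _ (R+1) hVf
    unfold gdeltaBasis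
    rw [hffresh, hcard', VG_addLeg, map_sub, map_smul, map_sum,
      Finset.sum_insert hfnot]
    rw [Cop_single, one_smul, wick_two _ _ G hG, edgeElem_self, one_mul]
    congr 2
    · exact Finset.sum_congr rfl fun u _ => by
        rw [Cop_single, one_smul, wick_two u _ G hG]
    · rw [Cop_single, one_smul, wick_two _ _ G hG]
  have hg1 : gdelta B = ∑ v ∈ VG G, AddMonoidAlgebra.single (addLeg v G) 1
      - (R : ℂ) • AddMonoidAlgebra.single (addLeg R.succPNat G) 1 := by
    rw [hB, gdelta_single, one_smul]
    unfold gdeltaBasis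
    rw [hfresh, hcard]
  have hg3 : DeltaOp B = ∑ v ∈ VG G, Cop (gdeltaBasis (addLeg v G))
      - (R : ℂ) • Cop (gdeltaBasis (addLeg R.succPNat G)) := by
    show Cop (gdelta (gdelta B)) = _
    rw [hg1, map_sub, map_sum, map_smul]
    simp only [gdelta_single, one_smul]
    rw [map_sub, map_sum, map_smul]
  rw [hg3, Finset.sum_congr rfl hCv, hCf]
  have himg : ∀ g : ℕ+ → GAlg, ∑ v ∈ VG G, g v = ∑ i ∈ range R, g i.succPNat := by
    intro g
    rw [hV]
    exact Finset.sum_image (fun x _ y _ h => Nat.succPNat_injective h)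
  rw [himg, himg]
  have hinner : ∀ i : ℕ, ∑ u ∈ VG G, edgeElem u i.succPNat * B
      = ∑ j ∈ range R, edgeElem j.succPNat i.succPNat * B := fun i => himg _
  simp only [hinner]
  have hdouble := double_sum_split R (fun i j => edgeElem i.succPNat j.succPNat * B) B
    (fun i j => by
      show edgeElem i.succPNat j.succPNat * B = edgeElem j.succPNat i.succPNat * B
      rw [edgeElem_comm])
    (fun i => by
      show edgeElem i.succPNat i.succPNat * B = B
      rw [edgeElem_self, one_mul])
  rw [Finset.sum_sub_distrib, hdouble, ← Finset.smul_sum]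
  have hswap : ∑ i ∈ range R, edgeElem R.succPNat i.succPNat * B
      = ∑ i ∈ range R, edgeElem i.succPNat R.succPNat * B :=
    Finset.sum_congr rfl fun i _ => by rw [edgeElem_comm]
  rw [hswap]
  have hswap2 : edgeElem (R+1).succPNat R.succPNat = edgeElem R.succPNat (R+1).succPNat :=
    edgeElem_comm _ _
  rw [hswap2]
  rw [← Nat.cast_smul_eq_nsmul ℂ 2, ← Nat.cast_smul_eq_nsmul ℂ R]
  push_cast
  set X := ∑ p ∈ (range R ×ˢ range R).filter (fun p => p.1 < p.2),
    edgeElem p.1.succPNat p.2.succPNat * B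
  set Y := ∑ i ∈ range R, edgeElem i.succPNat R.succPNat * B
  set Z := edgeElem R.succPNat (R+1).succPNat * B
  module
end

section
/- For every R and every overlap monomial G on R replicas, the function λ ↦ E_{λh}(G) is differentiable on ℝ and d/dλ E_{λh}(G) = E_{λh}(H·G), where G is regarded as a function on R+1 replicas and H(σ,J) := Σ_{i=1}^R h(σ_i,J) − R·h(σ_{R+1},J). -/
set_option maxHeartbeats 1000000


open MeasureTheory ProbabilityTheory Finset

/-- The deformed random Gibbs weight `μ_J^λ(σ) = μ_J(σ)e^{λh(σ,J)} / Σ_τ μ_J(τ)e^{λh(τ,J)}`. -/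
noncomputable def gibbs {Ωσ ΩJ : Type*} [Fintype Ωσ] (μ : ΩJ → Ωσ → ℝ)
    (h : Ωσ → ΩJ → ℝ) (lam : ℝ) (J : ΩJ) (σ : Ωσ) : ℝ :=
  μ J σ * Real.exp (lam * h σ J) / ∑ τ, μ J τ * Real.exp (lam * h τ J)

section Aux

variable {Ωσ ΩJ : Type} [Fintype Ωσ] [Nonempty Ωσ] [MeasurableSpace ΩJ]
variable {μ : ΩJ → Ωσ → ℝ} {h : Ωσ → ΩJ → ℝ}

lemma Zsum_pos (hμpos : ∀ J, ∀ σ : Ωσ, 0 ≤ μ J σ) (hμsum : ∀ J, ∑ σ : Ωσ, μ J σ = 1)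
    (lam : ℝ) (J : ΩJ) : 0 < ∑ τ, μ J τ * Real.exp (lam * h τ J) := by
  obtain ⟨τ0, hτ0⟩ : ∃ τ : Ωσ, 0 < μ J τ := by
    by_contra hc
    push_neg at hc
    have h2 : ∑ σ : Ωσ, μ J σ ≤ 0 := Finset.sum_nonpos fun σ _ => hc σ
    rw [hμsum J] at h2; linarith
  exact Finset.sum_pos' (fun τ _ => mul_nonneg (hμpos J τ) (Real.exp_pos _).le)
    ⟨τ0, Finset.mem_univ _, mul_pos hτ0 (Real.exp_pos _)⟩

lemma gibbs_nonneg (hμpos : ∀ J, ∀ σ : Ωσ, 0 ≤ μ J σ) (hμsum : ∀ J, ∑ σ : Ωσ, μ J σ = 1)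
    (lam : ℝ) (J : ΩJ) (σ : Ωσ) : 0 ≤ gibbs μ h lam J σ :=
  div_nonneg (mul_nonneg (hμpos J σ) (Real.exp_pos _).le) (Zsum_pos hμpos hμsum lam J).le

lemma gibbs_le_one (hμpos : ∀ J, ∀ σ : Ωσ, 0 ≤ μ J σ) (hμsum : ∀ J, ∑ σ : Ωσ, μ J σ = 1)
    (lam : ℝ) (J : ΩJ) (σ : Ωσ) : gibbs μ h lam J σ ≤ 1 := by
  rw [gibbs, div_le_one (Zsum_pos hμpos hμsum lam J)]
  exact Finset.single_le_sum (f := fun τ => μ J τ * Real.exp (lam * h τ J))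
    (fun τ _ => mul_nonneg (hμpos J τ) (Real.exp_pos _).le) (Finset.mem_univ σ)

lemma gibbs_sum_one (hμpos : ∀ J, ∀ σ : Ωσ, 0 ≤ μ J σ) (hμsum : ∀ J, ∑ σ : Ωσ, μ J σ = 1)
    (lam : ℝ) (J : ΩJ) : ∑ σ : Ωσ, gibbs μ h lam J σ = 1 := by
  simp only [gibbs]
  rw [← Finset.sum_div, div_self (Zsum_pos hμpos hμsum lam J).ne']

lemma sum_prod_weight (w : Ωσ → ℝ) (n : ℕ) :
    ∑ σ : Fin n → Ωσ, ∏ r, w (σ r) = (∑ τ, w τ) ^ n := by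
  induction n with
  | zero => simp
  | succ n ih =>
    have key : ∀ p : Ωσ × (Fin n → Ωσ),
        (∏ r : Fin (n+1), w ((Fin.snocEquiv (fun _ => Ωσ)) p r))
          = (∏ r : Fin n, w (p.2 r)) * w p.1 := by
      rintro ⟨x, f⟩
      rw [Fin.prod_univ_castSucc]
      simp [Fin.snocEquiv]
    rw [← Equiv.sum_comp (Fin.snocEquiv (fun _ : Fin (n+1) => Ωσ))
      (fun σ : Fin (n+1) → Ωσ => ∏ r, w (σ r)), Fintype.sum_prod_type]
    simp_rw [key]
    simp_rw [← Finset.sum_mul, ih, pow_succ]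
    rw [← Finset.mul_sum]

end Aux

section Aux2

variable {Ωσ ΩJ : Type} [Fintype Ωσ] [Nonempty Ωσ] [MeasurableSpace ΩJ]
variable {μ : ΩJ → Ωσ → ℝ} {h : Ωσ → ΩJ → ℝ}

lemma algebra_aux (n : ℕ) (g P E S Z Z' : ℝ) (hZ : Z ≠ 0) :
    g * ((S - n * (Z' / Z)) * ((P * E) / Z ^ n))
      = ((g * (P * (E * S))) * Z ^ n - (g * (P * E)) * (n * Z ^ (n-1) * Z')) / (Z ^ n) ^ 2 := by
  rcases n with _ | k
  · norm_num
    left; ring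
  · have hk : (k+1) - 1 = k := rfl
    rw [hk]
    field_simp
    ring

lemma gibbs_prod_eq (n : ℕ) (l : ℝ) (J : ΩJ) (σ : Fin n → Ωσ) :
    (∏ r, gibbs μ h l J (σ r))
      = ((∏ r, μ J (σ r)) * Real.exp (l * ∑ r, h (σ r) J))
          / (∑ τ, μ J τ * Real.exp (l * h τ J)) ^ n := by
  simp only [gibbs]
  rw [Finset.prod_div_distrib, Finset.prod_const, Finset.card_univ, Fintype.card_fin,
    Finset.prod_mul_distrib, ← Real.exp_sum, ← Finset.mul_sum]

lemma gibbs_avg_eq (hμpos : ∀ J, ∀ σ : Ωσ, 0 ≤ μ J σ) (hμsum : ∀ J, ∑ σ : Ωσ, μ J σ = 1)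
    (lam : ℝ) (J : ΩJ) :
    (∑ τ, h τ J * gibbs μ h lam J τ)
      = (∑ τ, μ J τ * (Real.exp (lam * h τ J) * h τ J))
          / (∑ τ, μ J τ * Real.exp (lam * h τ J)) := by
  simp only [gibbs, ← mul_div_assoc]
  rw [← Finset.sum_div]
  congr 1
  exact Finset.sum_congr rfl fun τ _ => by ring

lemma hasDerivAt_inner (hμpos : ∀ J, ∀ σ : Ωσ, 0 ≤ μ J σ) (hμsum : ∀ J, ∑ σ : Ωσ, μ J σ = 1)
    (n : ℕ) (G : (Fin n → Ωσ) → ℝ) (J : ΩJ) (lam : ℝ) :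
    HasDerivAt (fun l => ∑ σ : Fin n → Ωσ, G σ * ∏ r, gibbs μ h l J (σ r))
      (∑ σ : Fin n → Ωσ, G σ * ((((∑ r, h (σ r) J) - n * ∑ τ, h τ J * gibbs μ h lam J τ))
        * ∏ r, gibbs μ h lam J (σ r))) lam := by
  have hZne : (∑ τ, μ J τ * Real.exp (lam * h τ J)) ≠ 0 := (Zsum_pos hμpos hμsum lam J).ne'
  have hZ : HasDerivAt (fun l => ∑ τ, μ J τ * Real.exp (l * h τ J))
      (∑ τ, μ J τ * (Real.exp (lam * h τ J) * h τ J)) lam := by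
    apply HasDerivAt.fun_sum
    intro τ _
    exact ((hasDerivAt_mul_const (h τ J)).exp).const_mul (μ J τ)
  have hterm : ∀ σ : Fin n → Ωσ, HasDerivAt
      (fun l => G σ * ((∏ r, μ J (σ r)) * Real.exp (l * ∑ r, h (σ r) J))
          / (∑ τ, μ J τ * Real.exp (l * h τ J)) ^ n)
      (G σ * ((((∑ r, h (σ r) J) - n * ∑ τ, h τ J * gibbs μ h lam J τ))
        * ∏ r, gibbs μ h lam J (σ r))) lam := by
    intro σ
    have hnum : HasDerivAt
        (fun l => G σ * ((∏ r, μ J (σ r)) * Real.exp (l * ∑ r, h (σ r) J)))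
        (G σ * ((∏ r, μ J (σ r)) * (Real.exp (lam * ∑ r, h (σ r) J) * ∑ r, h (σ r) J))) lam :=
      (((hasDerivAt_mul_const (∑ r, h (σ r) J)).exp).const_mul _).const_mul (G σ)
    have hden : HasDerivAt (fun l => (∑ τ, μ J τ * Real.exp (l * h τ J)) ^ n)
        ((n : ℝ) * (∑ τ, μ J τ * Real.exp (lam * h τ J)) ^ (n-1)
          * (∑ τ, μ J τ * (Real.exp (lam * h τ J) * h τ J))) lam := hZ.pow n
    have hd := hnum.div hden (pow_ne_zero n hZne)
    have heq : G σ * ((((∑ r, h (σ r) J) - n * ∑ τ, h τ J * gibbs μ h lam J τ))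
        * ∏ r, gibbs μ h lam J (σ r))
        = ((G σ * ((∏ r, μ J (σ r)) * (Real.exp (lam * ∑ r, h (σ r) J) * ∑ r, h (σ r) J)))
              * (∑ τ, μ J τ * Real.exp (lam * h τ J)) ^ n
            - (G σ * ((∏ r, μ J (σ r)) * Real.exp (lam * ∑ r, h (σ r) J)))
              * ((n : ℝ) * (∑ τ, μ J τ * Real.exp (lam * h τ J)) ^ (n-1)
                * (∑ τ, μ J τ * (Real.exp (lam * h τ J) * h τ J))))
          / ((∑ τ, μ J τ * Real.exp (lam * h τ J)) ^ n) ^ 2 := by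
      rw [gibbs_prod_eq n lam J σ, gibbs_avg_eq hμpos hμsum lam J]
      exact algebra_aux n (G σ) _ _ _ _ _ hZne
    rw [heq]
    exact hd
  have hfun : (fun l => ∑ σ : Fin n → Ωσ, G σ * ∏ r, gibbs μ h l J (σ r))
      = fun l => ∑ σ : Fin n → Ωσ, G σ * ((∏ r, μ J (σ r)) * Real.exp (l * ∑ r, h (σ r) J))
          / (∑ τ, μ J τ * Real.exp (l * h τ J)) ^ n := by
    funext l
    exact Finset.sum_congr rfl fun σ _ => by rw [gibbs_prod_eq n l J σ]; ring
  rw [hfun]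
  exact HasDerivAt.fun_sum fun σ _ => hterm σ

end Aux2

section Aux3

variable {Ωσ ΩJ : Type} [Fintype Ωσ] [Nonempty Ωσ] [MeasurableSpace ΩJ]
variable {μ : ΩJ → Ωσ → ℝ} {h : Ωσ → ΩJ → ℝ}

lemma sum_succ_eq (hμpos : ∀ J, ∀ σ : Ωσ, 0 ≤ μ J σ) (hμsum : ∀ J, ∑ σ : Ωσ, μ J σ = 1)
    (n : ℕ) (G : (Fin n → Ωσ) → ℝ) (J : ΩJ) (lam : ℝ) :
    ∑ σ' : Fin (n+1) → Ωσ, (((∑ i : Fin n, h (σ' i.castSucc) J) - n * h (σ' (Fin.last n)) J)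
        * G (fun i => σ' i.castSucc)) * ∏ r, gibbs μ h lam J (σ' r)
    = ∑ σ : Fin n → Ωσ, G σ * ((((∑ r, h (σ r) J) - n * ∑ τ, h τ J * gibbs μ h lam J τ))
        * ∏ r, gibbs μ h lam J (σ r)) := by
  have key : ∀ p : Ωσ × (Fin n → Ωσ),
      (((∑ i : Fin n, h ((Fin.snocEquiv (fun _ => Ωσ)) p i.castSucc) J)
          - n * h ((Fin.snocEquiv (fun _ => Ωσ)) p (Fin.last n)) J)
        * G (fun i => (Fin.snocEquiv (fun _ => Ωσ)) p i.castSucc))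
        * ∏ r, gibbs μ h lam J ((Fin.snocEquiv (fun _ => Ωσ)) p r)
      = (((∑ i : Fin n, h (p.2 i) J) - n * h p.1 J) * G p.2)
          * ((∏ r : Fin n, gibbs μ h lam J (p.2 r)) * gibbs μ h lam J p.1) := by
    rintro ⟨x, f⟩
    rw [Fin.prod_univ_castSucc]
    simp [Fin.snocEquiv]
  rw [← Equiv.sum_comp (Fin.snocEquiv (fun _ : Fin (n+1) => Ωσ))
    (fun σ' : Fin (n+1) → Ωσ => (((∑ i : Fin n, h (σ' i.castSucc) J)
        - n * h (σ' (Fin.last n)) J) * G (fun i => σ' i.castSucc))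
      * ∏ r, gibbs μ h lam J (σ' r)), Fintype.sum_prod_type]
  simp_rw [key]
  rw [Finset.sum_comm]
  refine Finset.sum_congr rfl fun f _ => ?_
  calc ∑ x : Ωσ, (((∑ i : Fin n, h (f i) J) - n * h x J) * G f)
        * ((∏ r : Fin n, gibbs μ h lam J (f r)) * gibbs μ h lam J x)
      = ∑ x : Ωσ, (gibbs μ h lam J x
          * ((∑ i : Fin n, h (f i) J) * G f * ∏ r : Fin n, gibbs μ h lam J (f r))
        - (h x J * gibbs μ h lam J x) * ((n : ℝ) * G f * ∏ r : Fin n, gibbs μ h lam J (f r))) :=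
        Finset.sum_congr rfl fun x _ => by ring
    _ = (∑ x : Ωσ, gibbs μ h lam J x)
          * ((∑ i : Fin n, h (f i) J) * G f * ∏ r : Fin n, gibbs μ h lam J (f r))
        - (∑ x : Ωσ, h x J * gibbs μ h lam J x)
          * ((n : ℝ) * G f * ∏ r : Fin n, gibbs μ h lam J (f r)) := by
        rw [Finset.sum_sub_distrib, ← Finset.sum_mul, ← Finset.sum_mul]
    _ = G f * ((((∑ r, h (f r) J) - n * ∑ τ, h τ J * gibbs μ h lam J τ))
        * ∏ r, gibbs μ h lam J (f r)) := by
        rw [gibbs_sum_one hμpos hμsum]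
        ring

end Aux3

lemma integrable_id_gaussianReal (v : NNReal) : Integrable id (gaussianReal 0 v) := by
  by_cases hv : v = 0
  · subst hv
    rw [gaussianReal_zero_var]
    refine ⟨aestronglyMeasurable_id, ?_⟩
    simp [HasFiniteIntegral, lintegral_dirac]
  · rw [gaussianReal_of_var_ne_zero _ hv,
      integrable_withDensity_iff (measurable_gaussianPDF _ _)
        (Filter.Eventually.of_forall fun x => ENNReal.ofReal_lt_top)]
    have hb : (0:ℝ) < (2 * (v:ℝ))⁻¹ := by
      have h0 : (0:ℝ) < (v:ℝ) := NNReal.coe_pos.mpr (pos_iff_ne_zero.mpr hv)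
      positivity
    have heq : (fun x : ℝ => id x * (gaussianPDF 0 v x).toReal)
        = fun x : ℝ => (Real.sqrt (2 * Real.pi * (v:ℝ)))⁻¹
            * (x * Real.exp (-(2 * (v:ℝ))⁻¹ * x ^ 2)) := by
      funext x
      rw [gaussianPDF, ENNReal.toReal_ofReal (gaussianPDFReal_nonneg _ _ _),
        gaussianPDFReal]
      have harg : -(x - 0) ^ 2 / (2 * (v:ℝ)) = -(2 * (v:ℝ))⁻¹ * x ^ 2 := by
        field_simp
        ring
      rw [harg]
      simp only [id]
      ring
    rw [heq]
    exact (integrable_mul_exp_neg_mul_sq hb).const_mul _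

/-- The deformed quenched expectation `E_{λh}(F)` of a function `F` on `R` replicas. -/
noncomputable def qE {Ωσ ΩJ : Type*} [Fintype Ωσ] [MeasurableSpace ΩJ] (ν : Measure ΩJ)
    (μ : ΩJ → Ωσ → ℝ) (h : Ωσ → ΩJ → ℝ) (lam : ℝ) (R : ℕ)
    (F : (Fin R → Ωσ) → ΩJ → ℝ) : ℝ :=
  ∫ J, ∑ σ : Fin R → Ωσ, F σ J * ∏ r, gibbs μ h lam J (σ r) ∂ν

lemma h_integrable {Ωσ ΩJ : Type} [Fintype Ωσ] [MeasurableSpace ΩJ]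
    (ν : Measure ΩJ) {h : Ωσ → ΩJ → ℝ}
    (hhmeas : ∀ σ : Ωσ, Measurable (h σ))
    (hgauss : ∀ a : Ωσ → ℝ, ∃ v : NNReal,
      Measure.map (fun J => ∑ σ : Ωσ, a σ * h σ J) ν = gaussianReal 0 v)
    (τ : Ωσ) : Integrable (h τ) ν := by
  classical
  obtain ⟨v, hv⟩ := hgauss (fun σ => if σ = τ then 1 else 0)
  have hfun : (fun J => ∑ σ : Ωσ, (if σ = τ then (1:ℝ) else 0) * h σ J) = h τ := by
    funext J
    simp
  rw [hfun] at hv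
  have h1 : Integrable id (gaussianReal 0 v) := integrable_id_gaussianReal v
  rw [← hv] at h1
  exact (integrable_map_measure aestronglyMeasurable_id (hhmeas τ).aemeasurable).mp h1

/-- The overlap monomial `σ ↦ ∏_{1 ≤ i < j ≤ R} c_{σ_i,σ_j}^{m_{i,j}}` on `R` replicas. -/
def overlapMonomial {Ωσ : Type*} [Fintype Ωσ] (c : Ωσ → Ωσ → ℝ) (R : ℕ)
    (m : Fin R → Fin R → ℕ) : (Fin R → Ωσ) → ℝ := fun σ =>
  ∏ p ∈ Finset.univ.filter (fun p : Fin R × Fin R => p.1 < p.2), c (σ p.1) (σ p.2) ^ m p.1 p.2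

/-- For `G` an overlap function on `R` replicas, the overlap polynomial `ΔG` on `R+2`
replicas: `(ΔG)(σ) = (2 Σ_{1≤i<j≤R} c_{i,j} − 2R Σ_{i=1}^R c_{i,R+1} + R(R+1) c_{R+1,R+2})·G(σ)`. -/
def covDelta {Ωσ : Type*} [Fintype Ωσ] (c : Ωσ → Ωσ → ℝ) (R : ℕ)
    (G : (Fin R → Ωσ) → ℝ) : (Fin (R + 2) → Ωσ) → ℝ := fun σ =>
  (2 * ∑ p ∈ Finset.univ.filter (fun p : Fin R × Fin R => p.1 < p.2),
        c (σ (Fin.castAdd 2 p.1)) (σ (Fin.castAdd 2 p.2))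
    - 2 * R * ∑ i : Fin R, c (σ (Fin.castAdd 2 i)) (σ ⟨R, by omega⟩)
    + R * (R + 1) * c (σ ⟨R, by omega⟩) (σ ⟨R + 1, by omega⟩))
  * G (fun i => σ (Fin.castAdd 2 i))

lemma qE_hasDerivAt_general
    {Ωσ : Type} [Fintype Ωσ] [Nonempty Ωσ]
    {ΩJ : Type} [MeasurableSpace ΩJ] (ν : Measure ΩJ) [IsProbabilityMeasure ν]
    (μ : ΩJ → Ωσ → ℝ) (h : Ωσ → ΩJ → ℝ) (c : Ωσ → Ωσ → ℝ)
    (hμmeas : ∀ σ : Ωσ, Measurable fun J => μ J σ)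
    (hμpos : ∀ J, ∀ σ : Ωσ, 0 ≤ μ J σ) (hμsum : ∀ J, ∑ σ : Ωσ, μ J σ = 1)
    (hhmeas : ∀ σ : Ωσ, Measurable (h σ))
    (hgauss : ∀ a : Ωσ → ℝ, ∃ v : NNReal,
      Measure.map (fun J => ∑ σ : Ωσ, a σ * h σ J) ν = gaussianReal 0 v)
    (R : ℕ) (G : (Fin R → Ωσ) → ℝ) :
    Differentiable ℝ (fun lam => qE ν μ h lam R fun σ _ => G σ) ∧
    ∀ lam : ℝ,
      deriv (fun lam => qE ν μ h lam R fun σ _ => G σ) lam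
        = qE ν μ h lam (R + 1) fun σ J =>
            ((∑ i : Fin R, h (σ i.castSucc) J) - R * h (σ (Fin.last R)) J)
              * G (fun i => σ i.castSucc) := by
  have hgibbs_meas : ∀ (l : ℝ) (σ : Ωσ), Measurable fun J => gibbs μ h l J σ := fun l σ =>
    ((hμmeas σ).mul ((measurable_const.mul (hhmeas σ)).exp)).div
      (Finset.measurable_sum _ fun τ _ => (hμmeas τ).mul ((measurable_const.mul (hhmeas τ)).exp))
  have hFmeas : ∀ l : ℝ, Measurable fun J => ∑ σ : Fin R → Ωσ, G σ * ∏ r, gibbs μ h l J (σ r) :=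
    fun l => Finset.measurable_sum _ fun σ _ =>
      measurable_const.mul (Finset.measurable_prod _ fun r _ => hgibbs_meas l (σ r))
  have hF'meas : ∀ l : ℝ, Measurable fun J => ∑ σ' : Fin (R+1) → Ωσ,
      (((∑ i : Fin R, h (σ' i.castSucc) J) - R * h (σ' (Fin.last R)) J)
        * G (fun i => σ' i.castSucc)) * ∏ r, gibbs μ h l J (σ' r) :=
    fun l => Finset.measurable_sum _ fun σ' _ =>
      (((Finset.measurable_sum _ fun i _ => hhmeas (σ' i.castSucc)).sub
          (measurable_const.mul (hhmeas (σ' (Fin.last R))))).mul_const _).mul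
        (Finset.measurable_prod _ fun r _ => hgibbs_meas l (σ' r))
  have hGb : ∀ σ : Fin R → Ωσ, |G σ| ≤ ∑ σ0 : Fin R → Ωσ, |G σ0| := fun σ =>
    Finset.single_le_sum (f := fun σ0 => |G σ0|) (fun _ _ => abs_nonneg _) (Finset.mem_univ σ)
  have hTnn : ∀ J, (0:ℝ) ≤ ∑ τ : Ωσ, |h τ J| := fun J => Finset.sum_nonneg fun τ _ => abs_nonneg _
  have hhb : ∀ (J : ΩJ) (σ : Ωσ), |h σ J| ≤ ∑ τ : Ωσ, |h τ J| := fun J σ =>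
    Finset.single_le_sum (f := fun τ => |h τ J|) (fun _ _ => abs_nonneg _) (Finset.mem_univ σ)
  have hprod_nn : ∀ (l : ℝ) (J : ΩJ) (k : ℕ) (σ : Fin k → Ωσ),
      0 ≤ ∏ r, gibbs μ h l J (σ r) := fun l J k σ =>
    Finset.prod_nonneg fun r _ => gibbs_nonneg hμpos hμsum l J _
  have hsum_prod_one : ∀ (l : ℝ) (J : ΩJ) (k : ℕ),
      ∑ σ : Fin k → Ωσ, ∏ r, gibbs μ h l J (σ r) = 1 := fun l J k => by
    rw [sum_prod_weight (fun τ => gibbs μ h l J τ) k, gibbs_sum_one hμpos hμsum, one_pow]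
  have hbound : ∀ (l : ℝ) (J : ΩJ),
      |∑ σ' : Fin (R+1) → Ωσ, (((∑ i : Fin R, h (σ' i.castSucc) J) - R * h (σ' (Fin.last R)) J)
        * G (fun i => σ' i.castSucc)) * ∏ r, gibbs μ h l J (σ' r)|
      ≤ (∑ σ0 : Fin R → Ωσ, |G σ0|) * (2 * R * ∑ τ : Ωσ, |h τ J|) := by
    intro l J
    calc |∑ σ' : Fin (R+1) → Ωσ, (((∑ i : Fin R, h (σ' i.castSucc) J)
            - R * h (σ' (Fin.last R)) J) * G (fun i => σ' i.castSucc))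
            * ∏ r, gibbs μ h l J (σ' r)|
        ≤ ∑ σ' : Fin (R+1) → Ωσ, |(((∑ i : Fin R, h (σ' i.castSucc) J)
            - R * h (σ' (Fin.last R)) J) * G (fun i => σ' i.castSucc))
            * ∏ r, gibbs μ h l J (σ' r)| := Finset.abs_sum_le_sum_abs _ _
      _ ≤ ∑ σ' : Fin (R+1) → Ωσ, ((∑ σ0 : Fin R → Ωσ, |G σ0|) * (2 * R * ∑ τ : Ωσ, |h τ J|))
            * ∏ r, gibbs μ h l J (σ' r) := by
          refine Finset.sum_le_sum fun σ' _ => ?_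
          rw [abs_mul, abs_of_nonneg (hprod_nn l J _ σ'), abs_mul]
          refine mul_le_mul_of_nonneg_right ?_ (hprod_nn l J _ σ')
          have h1 : |(∑ i : Fin R, h (σ' i.castSucc) J) - R * h (σ' (Fin.last R)) J|
              ≤ 2 * R * ∑ τ : Ωσ, |h τ J| := by
            have ha : |∑ i : Fin R, h (σ' i.castSucc) J| ≤ R * ∑ τ : Ωσ, |h τ J| := by
              calc |∑ i : Fin R, h (σ' i.castSucc) J|
                  ≤ ∑ i : Fin R, |h (σ' i.castSucc) J| := Finset.abs_sum_le_sum_abs _ _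
                _ ≤ ∑ _i : Fin R, ∑ τ : Ωσ, |h τ J| :=
                    Finset.sum_le_sum fun i _ => hhb J _
                _ = R * ∑ τ : Ωσ, |h τ J| := by
                    rw [Finset.sum_const, Finset.card_univ, Fintype.card_fin, nsmul_eq_mul]
            have hb2 : |(R:ℝ) * h (σ' (Fin.last R)) J| ≤ R * ∑ τ : Ωσ, |h τ J| := by
              rw [abs_mul, Nat.abs_cast]
              exact mul_le_mul_of_nonneg_left (hhb J _) (Nat.cast_nonneg R)
            calc |(∑ i : Fin R, h (σ' i.castSucc) J) - R * h (σ' (Fin.last R)) J|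
                ≤ |∑ i : Fin R, h (σ' i.castSucc) J| + |(R:ℝ) * h (σ' (Fin.last R)) J| :=
                  abs_sub _ _
              _ ≤ R * (∑ τ : Ωσ, |h τ J|) + R * ∑ τ : Ωσ, |h τ J| := add_le_add ha hb2
              _ = 2 * R * ∑ τ : Ωσ, |h τ J| := by ring
          calc |(∑ i : Fin R, h (σ' i.castSucc) J) - R * h (σ' (Fin.last R)) J|
                * |G (fun i => σ' i.castSucc)|
              ≤ (2 * R * ∑ τ : Ωσ, |h τ J|) * (∑ σ0 : Fin R → Ωσ, |G σ0|) :=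
                mul_le_mul h1 (hGb _) (abs_nonneg _)
                  (by positivity)
            _ = (∑ σ0 : Fin R → Ωσ, |G σ0|) * (2 * R * ∑ τ : Ωσ, |h τ J|) := mul_comm _ _
      _ = (∑ σ0 : Fin R → Ωσ, |G σ0|) * (2 * R * ∑ τ : Ωσ, |h τ J|) := by
          rw [← Finset.mul_sum, hsum_prod_one l J (R+1), mul_one]
  have hFb : ∀ (l : ℝ) (J : ΩJ),
      |∑ σ : Fin R → Ωσ, G σ * ∏ r, gibbs μ h l J (σ r)| ≤ ∑ σ0 : Fin R → Ωσ, |G σ0| := by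
    intro l J
    calc |∑ σ : Fin R → Ωσ, G σ * ∏ r, gibbs μ h l J (σ r)|
        ≤ ∑ σ : Fin R → Ωσ, |G σ * ∏ r, gibbs μ h l J (σ r)| := Finset.abs_sum_le_sum_abs _ _
      _ ≤ ∑ σ0 : Fin R → Ωσ, |G σ0| := Finset.sum_le_sum fun σ _ => by
          rw [abs_mul, abs_of_nonneg (hprod_nn l J _ σ)]
          exact mul_le_of_le_one_right (abs_nonneg _)
            (Finset.prod_le_one (fun r _ => gibbs_nonneg hμpos hμsum l J _)
              (fun r _ => gibbs_le_one hμpos hμsum l J _))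
  have hTint : Integrable (fun J => ∑ τ : Ωσ, |h τ J|) ν :=
    integrable_finset_sum _ fun τ _ => (h_integrable ν hhmeas hgauss τ).abs
  have hboundint : Integrable
      (fun J => (∑ σ0 : Fin R → Ωσ, |G σ0|) * (2 * R * ∑ τ : Ωσ, |h τ J|)) ν :=
    (hTint.const_mul (2 * (R:ℝ))).const_mul _
  have hFint : ∀ l : ℝ,
      Integrable (fun J => ∑ σ : Fin R → Ωσ, G σ * ∏ r, gibbs μ h l J (σ r)) ν := fun l =>
    ⟨(hFmeas l).aestronglyMeasurable,
      HasFiniteIntegral.of_bounded (C := ∑ σ0 : Fin R → Ωσ, |G σ0|)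
        (Filter.Eventually.of_forall fun J => by rw [Real.norm_eq_abs]; exact hFb l J)⟩
  have key : ∀ lam : ℝ, HasDerivAt
      (fun l => ∫ J, ∑ σ : Fin R → Ωσ, G σ * ∏ r, gibbs μ h l J (σ r) ∂ν)
      (∫ J, ∑ σ' : Fin (R+1) → Ωσ, (((∑ i : Fin R, h (σ' i.castSucc) J)
          - R * h (σ' (Fin.last R)) J) * G (fun i => σ' i.castSucc))
        * ∏ r, gibbs μ h lam J (σ' r) ∂ν) lam := by
    intro lam
    have main := hasDerivAt_integral_of_dominated_loc_of_deriv_le (μ := ν) (x₀ := lam)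
      (F := fun l J => ∑ σ : Fin R → Ωσ, G σ * ∏ r, gibbs μ h l J (σ r))
      (F' := fun l J => ∑ σ' : Fin (R+1) → Ωσ, (((∑ i : Fin R, h (σ' i.castSucc) J)
          - R * h (σ' (Fin.last R)) J) * G (fun i => σ' i.castSucc))
        * ∏ r, gibbs μ h l J (σ' r))
      (bound := fun J => (∑ σ0 : Fin R → Ωσ, |G σ0|) * (2 * R * ∑ τ : Ωσ, |h τ J|))
      (Metric.ball_mem_nhds lam one_pos)
      (Filter.Eventually.of_forall fun l => (hFmeas l).aestronglyMeasurable)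
      (hFint lam)
      ((hF'meas lam).aestronglyMeasurable)
      (Filter.Eventually.of_forall fun J l _ => by
        rw [Real.norm_eq_abs]; exact hbound l J)
      hboundint
      (Filter.Eventually.of_forall fun J l _ => by
        have hd := hasDerivAt_inner (μ := μ) (h := h) hμpos hμsum R G J l
        beta_reduce
        rw [sum_succ_eq hμpos hμsum R G J l]
        exact hd)
    exact main.2
  exact ⟨fun lam => (key lam).differentiableAt, fun lam => (key lam).deriv⟩

/-- For every overlap monomial `G` on `R` replicas, `λ ↦ E_{λh}(G)` is
differentiable and `d/dλ E_{λh}(G) = E_{λh}(H·G)`, where `G` is regarded as a function on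
`R+1` replicas and `H(σ,J) = Σ_{i=1}^R h(σ_i,J) − R·h(σ_{R+1},J)`. -/
theorem deriv_qE_eq_qE_H_mul
    {Ωσ : Type} [Fintype Ωσ] [Nonempty Ωσ]
    {ΩJ : Type} [MeasurableSpace ΩJ] (ν : Measure ΩJ) [IsProbabilityMeasure ν]
    (μ : ΩJ → Ωσ → ℝ) (h : Ωσ → ΩJ → ℝ) (c : Ωσ → Ωσ → ℝ)
    (hμmeas : ∀ σ : Ωσ, Measurable fun J => μ J σ)
    (hμpos : ∀ J, ∀ σ : Ωσ, 0 ≤ μ J σ) (hμsum : ∀ J, ∑ σ : Ωσ, μ J σ = 1)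
    (hhmeas : ∀ σ : Ωσ, Measurable (h σ))
    (hgauss : ∀ a : Ωσ → ℝ, ∃ v : NNReal,
      Measure.map (fun J => ∑ σ : Ωσ, a σ * h σ J) ν = gaussianReal 0 v)
    (hcov : ∀ σ σ' : Ωσ, c σ σ' = ∫ J, h σ J * h σ' J ∂ν)
    (hnorm : ∀ σ : Ωσ, c σ σ = 1)
    (hindep : Indep (MeasurableSpace.comap (fun J => fun σ : Ωσ => h σ J) inferInstance)
      (MeasurableSpace.comap (fun J => fun σ : Ωσ => μ J σ) inferInstance) ν)
    (R : ℕ) (m : Fin R → Fin R → ℕ) :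
    Differentiable ℝ (fun lam => qE ν μ h lam R fun σ _ => overlapMonomial c R m σ) ∧
    ∀ lam : ℝ,
      deriv (fun lam => qE ν μ h lam R fun σ _ => overlapMonomial c R m σ) lam
        = qE ν μ h lam (R + 1) fun σ J =>
            ((∑ i : Fin R, h (σ i.castSucc) J) - R * h (σ (Fin.last R)) J)
              * overlapMonomial c R m (fun i => σ i.castSucc) := by
  exact qE_hasDerivAt_general ν μ h c hμmeas hμpos hμsum hhmeas hgauss R (overlapMonomial c R m)
end

section
/- For every R and every overlap monomial G on R replicas, the function λ ↦ E_{λh}(G) is infinitely differentiable on ℝ and all of its odd-order derivatives at λ = 0 vanish. -/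
open MeasureTheory ProbabilityTheory Finset

namespace QSOD

open MvPolynomial

/-- integrability of `|x|^k * exp (-b x^2)`. -/
lemma integrable_abs_pow_mul_exp_neg_mul_sq {b : ℝ} (hb : 0 < b) (k : ℕ) :
    Integrable (fun x : ℝ => |x| ^ k * Real.exp (-b * x ^ 2)) := by
  have h2k : Integrable (fun x : ℝ => x ^ (2 * k) * Real.exp (-b * x ^ 2)) := by
    have h := integrable_rpow_mul_exp_neg_mul_sq hb
      (show (-1 : ℝ) < ((2 * k : ℕ) : ℝ) by
        have : (0:ℝ) ≤ ((2 * k : ℕ) : ℝ) := Nat.cast_nonneg _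
        linarith)
    simpa only [Real.rpow_natCast] using h
  have h0 : Integrable (fun x : ℝ => Real.exp (-b * x ^ 2)) := integrable_exp_neg_mul_sq hb
  refine (h0.add h2k).mono' ?_ (Filter.Eventually.of_forall fun x => ?_)
  · exact (Continuous.mul (by continuity) (by continuity)).aestronglyMeasurable
  · have hev : (0:ℝ) ≤ x ^ (2 * k) := (even_two_mul k).pow_nonneg x
    have hx : |x| ^ k ≤ 1 + x ^ (2 * k) := by
      rcases le_total (|x| : ℝ) 1 with hx1 | hx1
      · have h1 : |x| ^ k ≤ 1 := pow_le_one₀ (abs_nonneg x) hx1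
        linarith
      · have h1 : |x| ^ k ≤ |x| ^ (2 * k) := pow_le_pow_right₀ hx1 (by omega)
        have h2 : |x| ^ (2 * k) = x ^ (2 * k) := by
          rw [← abs_pow, abs_of_nonneg hev]
        linarith
    have he : 0 < Real.exp (-b * x ^ 2) := Real.exp_pos _
    have hle : |x| ^ k * Real.exp (-b * x ^ 2) ≤ (1 + x ^ (2*k)) * Real.exp (-b * x ^ 2) :=
      mul_le_mul_of_nonneg_right hx he.le
    calc ‖|x| ^ k * Real.exp (-b * x ^ 2)‖ = |x| ^ k * Real.exp (-b * x ^ 2) := by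
          rw [Real.norm_eq_abs, abs_of_nonneg (by positivity)]
      _ ≤ (1 + x ^ (2*k)) * Real.exp (-b * x ^ 2) := hle
      _ = Real.exp (-b * x ^ 2) + x ^ (2*k) * Real.exp (-b * x ^ 2) := by ring

/-- moments of the Gaussian measure are integrable. -/
lemma integrable_abs_pow_gaussian (v : NNReal) (k : ℕ) :
    Integrable (fun x : ℝ => |x| ^ k) (gaussianReal 0 v) := by
  by_cases hv : v = 0
  · subst hv
    rw [gaussianReal_zero_var]
    exact (integrable_const _).congr (ae_eq_dirac fun x => |x| ^ k).symm
  · rw [gaussianReal_of_var_ne_zero _ hv]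
    rw [integrable_withDensity_iff (measurable_gaussianPDF _ _)
      (Filter.Eventually.of_forall fun _ => ENNReal.ofReal_lt_top)]
    have hvpos : (0:ℝ) < (v:ℝ) := by
      exact lt_of_le_of_ne (v.2) (by exact_mod_cast (Ne.symm hv))
    have hbpos : 0 < (2 * (v:ℝ))⁻¹ := by positivity
    have h := integrable_abs_pow_mul_exp_neg_mul_sq hbpos k
    refine (h.const_mul ((Real.sqrt (2 * Real.pi * v))⁻¹)).congr ?_
    refine Filter.Eventually.of_forall fun x => ?_
    rw [gaussianPDF_def]
    simp only
    rw [ENNReal.toReal_ofReal (gaussianPDFReal_nonneg _ _ _), gaussianPDFReal]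
    have hx2 : -(x - 0) ^ 2 / (2 * (v:ℝ)) = -(2 * (v:ℝ))⁻¹ * x ^ 2 := by
      field_simp
      ring
    rw [hx2]
    ring

/-- odd moments of the centered Gaussian vanish. -/
lemma integral_pow_gaussian_odd (v : NNReal) {k : ℕ} (hk : Odd k) :
    ∫ x : ℝ, x ^ k ∂(gaussianReal 0 v) = 0 := by
  have hmap : (gaussianReal 0 v).map (fun x => (-1 : ℝ) * x) = gaussianReal 0 v := by
    rw [gaussianReal_map_const_mul]
    norm_num
  have h1 : ∫ x : ℝ, x ^ k ∂(gaussianReal 0 v)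
      = ∫ x : ℝ, ((-1 : ℝ) * x) ^ k ∂(gaussianReal 0 v) := by
    conv_lhs => rw [← hmap]
    rw [integral_map (by fun_prop) (by fun_prop)]
  have h2 : ∀ x : ℝ, ((-1 : ℝ) * x) ^ k = -(x ^ k) := by
    intro x
    rw [neg_one_mul, hk.neg_pow]
  simp only [h2, integral_neg] at h1
  linarith

lemma pow_sum_le_card_pow_mul_sum {ι : Type*} [Fintype ι] [Nonempty ι] (g : ι → ℝ)
    (hg : ∀ i, 0 ≤ g i) (k : ℕ) :
    (∑ i, g i) ^ k ≤ (Fintype.card ι : ℝ) ^ k * ∑ i, g i ^ k := by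
  have hne : (Finset.univ : Finset ι).Nonempty := univ_nonempty
  obtain ⟨i₀, -, hi₀⟩ := Finset.exists_mem_eq_sup' hne g
  have h1 : ∑ i, g i ≤ (Fintype.card ι : ℝ) * g i₀ := by
    rw [← Finset.card_univ, ← nsmul_eq_mul]
    refine Finset.sum_le_card_nsmul _ _ _ fun i _ => ?_
    rw [← hi₀]
    exact Finset.le_sup' g (mem_univ i)
  have h2 : (∑ i, g i) ^ k ≤ ((Fintype.card ι : ℝ) * g i₀) ^ k := by
    refine pow_le_pow_left₀ (Finset.sum_nonneg fun i _ => hg i) h1 k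
  have h3 : ((Fintype.card ι : ℝ) * g i₀) ^ k = (Fintype.card ι : ℝ) ^ k * g i₀ ^ k :=
    mul_pow _ _ _
  have h4 : g i₀ ^ k ≤ ∑ i, g i ^ k :=
    Finset.single_le_sum (fun i _ => pow_nonneg (hg i) k) (mem_univ i₀)
  calc (∑ i, g i) ^ k ≤ (Fintype.card ι : ℝ) ^ k * g i₀ ^ k := by rw [← h3]; exact h2
    _ ≤ (Fintype.card ι : ℝ) ^ k * ∑ i, g i ^ k := by
        exact mul_le_mul_of_nonneg_left h4 (by positivity)

section Moments

variable {Ωσ : Type} [Fintype Ωσ] [Nonempty Ωσ]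
  {ΩJ : Type} [MeasurableSpace ΩJ] {ν : Measure ΩJ} [IsProbabilityMeasure ν]
  {h : Ωσ → ΩJ → ℝ}

/-- Each `h τ` has a Gaussian law. -/
lemma law_single (hhmeas : ∀ σ : Ωσ, Measurable (h σ))
    (hgauss : ∀ a : Ωσ → ℝ, ∃ v : NNReal,
      Measure.map (fun J => ∑ σ : Ωσ, a σ * h σ J) ν = gaussianReal 0 v) (τ : Ωσ) :
    ∃ v : NNReal, Measure.map (h τ) ν = gaussianReal 0 v := by
  classical
  obtain ⟨v, hv⟩ := hgauss (fun σ => if σ = τ then 1 else 0)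
  refine ⟨v, ?_⟩
  rw [← hv]
  congr 1
  funext J
  simp [Finset.sum_ite_eq']

lemma integrable_abs_pow_single (hhmeas : ∀ σ : Ωσ, Measurable (h σ))
    (hgauss : ∀ a : Ωσ → ℝ, ∃ v : NNReal,
      Measure.map (fun J => ∑ σ : Ωσ, a σ * h σ J) ν = gaussianReal 0 v) (τ : Ωσ) (k : ℕ) :
    Integrable (fun J => |h τ J| ^ k) ν := by
  obtain ⟨v, hv⟩ := law_single hhmeas hgauss τ
  have : Integrable (fun x : ℝ => |x| ^ k) (Measure.map (h τ) ν) := by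
    rw [hv]; exact integrable_abs_pow_gaussian v k
  rw [integrable_map_measure (measurable_abs.pow_const k).aestronglyMeasurable (hhmeas τ).aemeasurable] at this
  exact this

/-- Integrability of powers of `1 + ∑ τ |h τ|`. -/
lemma integrable_one_add_M_pow (hhmeas : ∀ σ : Ωσ, Measurable (h σ))
    (hgauss : ∀ a : Ωσ → ℝ, ∃ v : NNReal,
      Measure.map (fun J => ∑ σ : Ωσ, a σ * h σ J) ν = gaussianReal 0 v) (n : ℕ) :
    Integrable (fun J => (1 + ∑ τ : Ωσ, |h τ J|) ^ n) ν := by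
  have hMk : ∀ k : ℕ, Integrable (fun J => (∑ τ : Ωσ, |h τ J|) ^ k) ν := by
    intro k
    have hint : Integrable (fun J => (Fintype.card Ωσ : ℝ) ^ k * ∑ τ : Ωσ, |h τ J| ^ k) ν := by
      exact (integrable_finset_sum _ fun τ _ => integrable_abs_pow_single hhmeas hgauss τ k).const_mul _
    refine hint.mono' ?_ (Filter.Eventually.of_forall fun J => ?_)
    · refine Measurable.aestronglyMeasurable ?_
      exact (Finset.measurable_sum _ fun τ _ => (hhmeas τ).abs).pow_const k
    · rw [Real.norm_eq_abs, abs_of_nonneg (by positivity)]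
      exact pow_sum_le_card_pow_mul_sum _ (fun τ => abs_nonneg _) k
  -- (1+M)^n ≤ 2^n * (1 + M^n)
  have hint : Integrable (fun J => (2:ℝ) ^ n * (1 + (∑ τ : Ωσ, |h τ J|) ^ n)) ν :=
    ((integrable_const 1).add (hMk n)).const_mul _
  refine hint.mono' ?_ (Filter.Eventually.of_forall fun J => ?_)
  · refine Measurable.aestronglyMeasurable ?_
    exact ((Finset.measurable_sum _ fun τ _ => (hhmeas τ).abs).const_add 1).pow_const n
  · set M := ∑ τ : Ωσ, |h τ J| with hM
    have hM0 : 0 ≤ M := Finset.sum_nonneg fun τ _ => abs_nonneg _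
    rw [Real.norm_eq_abs, abs_of_nonneg (by positivity)]
    have h1 : (1:ℝ) + M ≤ 2 * max 1 M := by
      rcases le_total M 1 with hm | hm
      · rw [max_eq_left hm]; linarith
      · rw [max_eq_right hm]; linarith
    calc (1 + M) ^ n ≤ (2 * max 1 M) ^ n :=
          pow_le_pow_left₀ (by linarith) h1 n
      _ = 2 ^ n * (max 1 M) ^ n := mul_pow _ _ _
      _ ≤ 2 ^ n * (1 + M ^ n) := by
          refine mul_le_mul_of_nonneg_left ?_ (by positivity)
          rcases max_cases 1 M with ⟨he, -⟩ | ⟨he, -⟩ <;> rw [he]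
          · simp
            positivity
          · nlinarith [pow_nonneg hM0 n]

/-- domination of monomials in `h` by `(1+M)^k`. -/
lemma prod_abs_pow_le (b : Ωσ → ℕ) (J : ΩJ) :
    ∏ τ : Ωσ, |h τ J| ^ b τ ≤ (1 + ∑ τ : Ωσ, |h τ J|) ^ (∑ τ : Ωσ, b τ) := by
  set M := ∑ τ : Ωσ, |h τ J| with hM
  have hM0 : 0 ≤ M := Finset.sum_nonneg fun τ _ => abs_nonneg _
  calc ∏ τ : Ωσ, |h τ J| ^ b τ ≤ ∏ τ : Ωσ, (1 + M) ^ b τ := by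
        refine Finset.prod_le_prod (fun τ _ => by positivity) (fun τ _ => ?_)
        refine pow_le_pow_left₀ (abs_nonneg _) ?_ _
        have : |h τ J| ≤ M := Finset.single_le_sum (f := fun τ => |h τ J|)
          (fun τ _ => abs_nonneg _) (mem_univ τ)
        linarith
    _ = (1 + M) ^ (∑ τ : Ωσ, b τ) := by rw [← Finset.prod_pow_eq_pow_sum]

lemma integrable_prod_pow (hhmeas : ∀ σ : Ωσ, Measurable (h σ))
    (hgauss : ∀ a : Ωσ → ℝ, ∃ v : NNReal,
      Measure.map (fun J => ∑ σ : Ωσ, a σ * h σ J) ν = gaussianReal 0 v) (b : Ωσ → ℕ) :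
    Integrable (fun J => ∏ τ : Ωσ, h τ J ^ b τ) ν := by
  refine (integrable_one_add_M_pow hhmeas hgauss (∑ τ : Ωσ, b τ)).mono' ?_
    (Filter.Eventually.of_forall fun J => ?_)
  · exact (Finset.measurable_prod _ fun τ _ => (hhmeas τ).pow_const _).aestronglyMeasurable
  · have h1 : |∏ τ : Ωσ, h τ J ^ b τ| = ∏ τ : Ωσ, |h τ J| ^ b τ := by
      rw [Finset.abs_prod]
      exact Finset.prod_congr rfl fun τ _ => abs_pow _ _
    rw [Real.norm_eq_abs, h1]
    have h2 := prod_abs_pow_le (h := h) b J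
    have hM0 : (0:ℝ) ≤ ∑ τ : Ωσ, |h τ J| := Finset.sum_nonneg fun τ _ => abs_nonneg _
    exact h2

/-- Odd mixed moments of the Gaussian family vanish. -/
lemma mixed_moment_odd (hhmeas : ∀ σ : Ωσ, Measurable (h σ))
    (hgauss : ∀ a : Ωσ → ℝ, ∃ v : NNReal,
      Measure.map (fun J => ∑ σ : Ωσ, a σ * h σ J) ν = gaussianReal 0 v)
    (b : Ωσ → ℕ) (hb : Odd (∑ τ : Ωσ, b τ)) :
    ∫ J, ∏ τ : Ωσ, h τ J ^ b τ ∂ν = 0 := by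
  classical
  set k := ∑ τ : Ωσ, b τ with hk
  set V : (Ωσ → ℕ) → ℝ := fun b' => ∫ J, ∏ τ : Ωσ, h τ J ^ b' τ ∂ν with hV
  have key : ∀ a : Ωσ → ℝ,
      ∑ b' ∈ piAntidiag (univ : Finset Ωσ) k,
        ((Nat.multinomial univ b' : ℝ) * ∏ τ : Ωσ, a τ ^ b' τ) * V b' = 0 := by
    intro a
    obtain ⟨v, hv⟩ := hgauss a
    have hmeas : Measurable fun J => ∑ σ : Ωσ, a σ * h σ J :=
      Finset.measurable_sum _ fun σ _ => (hhmeas σ).const_mul _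
    have h0 : ∫ J, (∑ σ : Ωσ, a σ * h σ J) ^ k ∂ν = 0 := by
      have hmap := integral_map (μ := ν) (φ := fun J => ∑ σ : Ωσ, a σ * h σ J)
        hmeas.aemeasurable (f := fun x : ℝ => x ^ k)
        (measurable_id.pow_const k).aestronglyMeasurable
      rw [hv] at hmap
      rw [← hmap, integral_pow_gaussian_odd v hb]
    have hexp : ∀ J, (∑ σ : Ωσ, a σ * h σ J) ^ k
        = ∑ b' ∈ piAntidiag (univ : Finset Ωσ) k,
            ((Nat.multinomial univ b' : ℝ) * ∏ τ : Ωσ, a τ ^ b' τ) * ∏ τ : Ωσ, h τ J ^ b' τ := by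
      intro J
      rw [Finset.sum_pow_eq_sum_piAntidiag]
      refine Finset.sum_congr rfl fun b' _ => ?_
      rw [mul_assoc]
      congr 1
      rw [← Finset.prod_mul_distrib]
      exact Finset.prod_congr rfl fun τ _ => (mul_pow _ _ _)
    have hswap : ∫ J, (∑ σ : Ωσ, a σ * h σ J) ^ k ∂ν
        = ∑ b' ∈ piAntidiag (univ : Finset Ωσ) k,
            ((Nat.multinomial univ b' : ℝ) * ∏ τ : Ωσ, a τ ^ b' τ) * V b' := by
      simp_rw [hexp]
      rw [integral_finset_sum]
      · exact Finset.sum_congr rfl fun b' _ => integral_const_mul _ _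
      · exact fun b' _ => (integrable_prod_pow hhmeas hgauss b').const_mul _
    rw [← hswap, h0]
  -- build the polynomial and use funext
  set P : MvPolynomial Ωσ ℝ :=
    ∑ b' ∈ piAntidiag (univ : Finset Ωσ) k,
      MvPolynomial.C ((Nat.multinomial univ b' : ℝ) * V b')
        * ∏ τ : Ωσ, MvPolynomial.X τ ^ b' τ with hP
  have hPeval : ∀ a : Ωσ → ℝ, MvPolynomial.eval a P = 0 := by
    intro a
    rw [hP, map_sum]
    rw [← key a]
    refine Finset.sum_congr rfl fun b' _ => ?_
    rw [map_mul, MvPolynomial.eval_C, map_prod]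
    simp only [map_pow, MvPolynomial.eval_X]
    ring
  have hP0 : P = 0 := MvPolynomial.funext fun x => by rw [hPeval x]; simp
  -- extract the coefficient at b
  set β : Ωσ →₀ ℕ := Finsupp.equivFunOnFinite.symm b with hβ
  have hmono : ∀ b' : Ωσ → ℕ, (∏ τ : Ωσ, MvPolynomial.X τ ^ b' τ : MvPolynomial Ωσ ℝ)
      = MvPolynomial.monomial (Finsupp.equivFunOnFinite.symm b') 1 := by
    intro b'
    rw [← MvPolynomial.prod_X_pow_eq_monomial]
    refine (Finset.prod_subset (Finset.subset_univ _) fun τ _ hτ => ?_).symm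
    have : (Finsupp.equivFunOnFinite.symm b') τ = 0 := by
      by_contra hne
      exact hτ (Finsupp.mem_support_iff.mpr hne)
    rw [show (Finsupp.equivFunOnFinite.symm b') τ = b' τ from rfl] at this
    rw [this, pow_zero]
  have hcoeff : MvPolynomial.coeff β P = (Nat.multinomial univ b : ℝ) * V b := by
    rw [hP, MvPolynomial.coeff_sum]
    have hbmem : b ∈ piAntidiag (univ : Finset Ωσ) k := by
      rw [Finset.mem_piAntidiag]
      exact ⟨hk.symm, fun i _ => mem_univ i⟩
    rw [Finset.sum_eq_single b]
    · rw [hmono, MvPolynomial.C_mul_monomial, mul_one, MvPolynomial.coeff_monomial,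
        if_pos rfl]
    · intro b' _ hne
      rw [hmono, MvPolynomial.C_mul_monomial, mul_one, MvPolynomial.coeff_monomial, if_neg]
      intro heq
      exact hne (Finsupp.equivFunOnFinite.symm.injective heq)
    · intro habs
      exact absurd hbmem habs
  rw [hP0] at hcoeff
  simp only [MvPolynomial.coeff_zero] at hcoeff
  have hmul : (0:ℝ) < (Nat.multinomial univ b : ℝ) := by
    exact_mod_cast Nat.multinomial_pos _ _
  have := hcoeff.symm
  rcases mul_eq_zero.mp this with h1 | h1
  · exact absurd h1 (ne_of_gt hmul)
  · exact h1

end Moments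



open MvPolynomial

variable {Ωσ : Type} [Fintype Ωσ] [Nonempty Ωσ] {ΩJ : Type} [MeasurableSpace ΩJ]

/-- the formal derivative operator for the Gibbs evaluation. -/
noncomputable def pD (q : MvPolynomial (Ωσ ⊕ Ωσ) ℝ) : MvPolynomial (Ωσ ⊕ Ωσ) ℝ :=
  ∑ τ : Ωσ, pderiv (Sum.inl τ) q *
    (X (Sum.inl τ) * (X (Sum.inr τ) - ∑ s : Ωσ, X (Sum.inl s) * X (Sum.inr s)))

/-- the evaluation point: `inl`-variables are Gibbs weights, `inr`-variables are `h`. -/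
noncomputable def ev (μ : ΩJ → Ωσ → ℝ) (h : Ωσ → ΩJ → ℝ) (lam : ℝ) (J : ΩJ) :
    Ωσ ⊕ Ωσ → ℝ :=
  Sum.elim (gibbs μ h lam J) (fun τ => h τ J)

lemma pD_add (p q : MvPolynomial (Ωσ ⊕ Ωσ) ℝ) : pD (p + q) = pD p + pD q := by
  unfold pD
  rw [← Finset.sum_add_distrib]
  refine Finset.sum_congr rfl fun τ _ => ?_
  rw [map_add, add_mul]

lemma pD_mul (p q : MvPolynomial (Ωσ ⊕ Ωσ) ℝ) : pD (p * q) = pD p * q + p * pD q := by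
  unfold pD
  rw [Finset.sum_mul, Finset.mul_sum, ← Finset.sum_add_distrib]
  refine Finset.sum_congr rfl fun τ _ => ?_
  rw [pderiv_mul]
  ring

lemma pD_C (a : ℝ) : pD (C a : MvPolynomial (Ωσ ⊕ Ωσ) ℝ) = 0 := by
  unfold pD
  refine Finset.sum_eq_zero fun τ _ => ?_
  rw [pderiv_C, zero_mul]

lemma pD_X_inl [DecidableEq Ωσ] (τ : Ωσ) :
    pD (X (Sum.inl τ) : MvPolynomial (Ωσ ⊕ Ωσ) ℝ)
      = X (Sum.inl τ) * (X (Sum.inr τ) - ∑ s : Ωσ, X (Sum.inl s) * X (Sum.inr s)) := by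
  unfold pD
  rw [Finset.sum_eq_single τ]
  · rw [pderiv_X_self, one_mul]
  · intro s _ hs
    rw [pderiv_X_of_ne (by simpa using (Ne.symm hs)), zero_mul]
  · intro hτ; exact absurd (mem_univ τ) hτ

lemma pD_X_inr (τ : Ωσ) : pD (X (Sum.inr τ) : MvPolynomial (Ωσ ⊕ Ωσ) ℝ) = 0 := by
  unfold pD
  refine Finset.sum_eq_zero fun s _ => ?_
  rw [pderiv_X_of_ne (by simp), zero_mul]

section Analysis

variable {ν : Measure ΩJ} [IsProbabilityMeasure ν] {μ : ΩJ → Ωσ → ℝ} {h : Ωσ → ΩJ → ℝ}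

lemma Zpos (hμpos : ∀ J, ∀ σ : Ωσ, 0 ≤ μ J σ) (hμsum : ∀ J, ∑ σ : Ωσ, μ J σ = 1)
    (lam : ℝ) (J : ΩJ) : 0 < ∑ τ : Ωσ, μ J τ * Real.exp (lam * h τ J) := by
  have hex : ∃ τ : Ωσ, 0 < μ J τ := by
    by_contra hc
    push_neg at hc
    have hz : ∑ σ : Ωσ, μ J σ = 0 :=
      Finset.sum_eq_zero fun τ _ => le_antisymm (hc τ) (hμpos J τ)
    rw [hμsum J] at hz
    norm_num at hz
  obtain ⟨τ₀, hτ₀⟩ := hex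
  exact Finset.sum_pos' (fun τ _ => mul_nonneg (hμpos J τ) (Real.exp_pos _).le)
    ⟨τ₀, mem_univ _, mul_pos hτ₀ (Real.exp_pos _)⟩

lemma gibbs_nonneg (hμpos : ∀ J, ∀ σ : Ωσ, 0 ≤ μ J σ)
    (hμsum : ∀ J, ∑ σ : Ωσ, μ J σ = 1) (lam : ℝ) (J : ΩJ) (τ : Ωσ) :
    0 ≤ gibbs μ h lam J τ :=
  div_nonneg (mul_nonneg (hμpos J τ) (Real.exp_pos _).le) (Zpos hμpos hμsum lam J).le

lemma gibbs_le_one (hμpos : ∀ J, ∀ σ : Ωσ, 0 ≤ μ J σ)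
    (hμsum : ∀ J, ∑ σ : Ωσ, μ J σ = 1) (lam : ℝ) (J : ΩJ) (τ : Ωσ) :
    gibbs μ h lam J τ ≤ 1 := by
  rw [gibbs, div_le_one (Zpos hμpos hμsum lam J)]
  exact Finset.single_le_sum
    (f := fun s => μ J s * Real.exp (lam * h s J))
    (fun s _ => mul_nonneg (hμpos J s) (Real.exp_pos _).le) (mem_univ τ)

lemma measurable_gibbs (hμmeas : ∀ σ : Ωσ, Measurable fun J => μ J σ)
    (hhmeas : ∀ σ : Ωσ, Measurable (h σ)) (lam : ℝ) (τ : Ωσ) :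
    Measurable fun J => gibbs μ h lam J τ := by
  unfold gibbs
  exact ((hμmeas τ).mul (((hhmeas τ).const_mul lam).exp)).div
    (Finset.measurable_sum _ fun s _ => (hμmeas s).mul (((hhmeas s).const_mul lam).exp))

lemma hasDerivAt_gibbs (hμpos : ∀ J, ∀ σ : Ωσ, 0 ≤ μ J σ)
    (hμsum : ∀ J, ∑ σ : Ωσ, μ J σ = 1) (lam : ℝ) (J : ΩJ) (τ : Ωσ) :
    HasDerivAt (fun l => gibbs μ h l J τ)
      (gibbs μ h lam J τ * (h τ J - ∑ s : Ωσ, gibbs μ h lam J s * h s J)) lam := by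
  have hN : ∀ s : Ωσ, HasDerivAt (fun l => μ J s * Real.exp (l * h s J))
      (μ J s * Real.exp (lam * h s J) * h s J) lam := by
    intro s
    have h1 : HasDerivAt (fun l : ℝ => l * h s J) (h s J) lam := by
      simpa using (hasDerivAt_id lam).mul_const (h s J)
    have h2 := h1.exp
    have h3 := h2.const_mul (μ J s)
    exact h3.congr_deriv (by ring)
  have hZ : HasDerivAt (fun l => ∑ s : Ωσ, μ J s * Real.exp (l * h s J))
      (∑ s : Ωσ, μ J s * Real.exp (lam * h s J) * h s J) lam :=
    HasDerivAt.fun_sum fun s _ => hN s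
  have hZpos := Zpos (h := h) hμpos hμsum lam J
  have hD := (hN τ).div hZ (ne_of_gt hZpos)
  have heq : (fun l => gibbs μ h l J τ)
      = fun l => μ J τ * Real.exp (l * h τ J) / ∑ s : Ωσ, μ J s * Real.exp (l * h s J) := by
    funext l; rfl
  rw [heq]
  refine hD.congr_deriv ?_
  symm
  rw [gibbs]
  have hsum : ∑ s : Ωσ, gibbs μ h lam J s * h s J
      = (∑ s : Ωσ, μ J s * Real.exp (lam * h s J) * h s J)
        / (∑ s : Ωσ, μ J s * Real.exp (lam * h s J)) := by
    rw [Finset.sum_div]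
    refine Finset.sum_congr rfl fun s _ => ?_
    rw [gibbs, div_mul_eq_mul_div]
  rw [hsum]
  field_simp

lemma hasDerivAt_ev (hμpos : ∀ J, ∀ σ : Ωσ, 0 ≤ μ J σ)
    (hμsum : ∀ J, ∑ σ : Ωσ, μ J σ = 1) (lam : ℝ) (J : ΩJ) (v : Ωσ ⊕ Ωσ) :
    HasDerivAt (fun l => ev μ h l J v)
      (eval (ev μ h lam J) (pD (X v))) lam := by
  classical
  cases v with
  | inl τ =>
    rw [pD_X_inl]
    have := hasDerivAt_gibbs (h := h) hμpos hμsum lam J τ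
    refine this.congr_deriv ?_
    symm
    simp only [map_mul, map_sub, map_sum, eval_X]
    rfl
  | inr τ =>
    rw [pD_X_inr]
    simp only [map_zero]
    exact hasDerivAt_const lam (h τ J)

lemma hasDerivAt_eval (hμpos : ∀ J, ∀ σ : Ωσ, 0 ≤ μ J σ)
    (hμsum : ∀ J, ∑ σ : Ωσ, μ J σ = 1) (lam : ℝ) (J : ΩJ)
    (q : MvPolynomial (Ωσ ⊕ Ωσ) ℝ) :
    HasDerivAt (fun l => eval (ev μ h l J) q) (eval (ev μ h lam J) (pD q)) lam := by
  induction q using MvPolynomial.induction_on with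
  | C a =>
    rw [pD_C, map_zero]
    simp only [eval_C]
    exact hasDerivAt_const lam a
  | add p q hp hq =>
    rw [pD_add, map_add]
    simp only [map_add]
    exact hp.add hq
  | mul_X p v hp =>
    rw [pD_mul]
    simp only [map_add, map_mul, eval_X]
    exact hp.mul (hasDerivAt_ev hμpos hμsum lam J v)

lemma measurable_eval (hμmeas : ∀ σ : Ωσ, Measurable fun J => μ J σ)
    (hhmeas : ∀ σ : Ωσ, Measurable (h σ)) (lam : ℝ) (q : MvPolynomial (Ωσ ⊕ Ωσ) ℝ) :
    Measurable fun J => eval (ev μ h lam J) q := by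
  induction q using MvPolynomial.induction_on with
  | C a => simpa only [eval_C] using measurable_const
  | add p q hp hq => simp only [map_add]; exact hp.add hq
  | mul_X p v hp =>
    simp only [map_mul, eval_X]
    refine hp.mul ?_
    cases v with
    | inl τ => exact measurable_gibbs hμmeas hhmeas lam τ
    | inr τ => exact hhmeas τ

/-- uniform bound for the evaluation. -/
lemma abs_eval_le (hμpos : ∀ J, ∀ σ : Ωσ, 0 ≤ μ J σ)
    (hμsum : ∀ J, ∑ σ : Ωσ, μ J σ = 1) (lam : ℝ) (J : ΩJ)
    (q : MvPolynomial (Ωσ ⊕ Ωσ) ℝ) :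
    |eval (ev μ h lam J) q| ≤ (∑ m ∈ q.support, |coeff m q|)
      * (1 + ∑ τ : Ωσ, |h τ J|) ^ q.totalDegree := by
  set M := ∑ τ : Ωσ, |h τ J| with hM
  have hM0 : 0 ≤ M := Finset.sum_nonneg fun τ _ => abs_nonneg _
  have hC1 : (1:ℝ) ≤ 1 + M := by linarith
  have hev : ∀ v, |ev μ h lam J v| ≤ 1 + M := by
    intro v
    cases v with
    | inl τ =>
      rw [show ev μ h lam J (Sum.inl τ) = gibbs μ h lam J τ from rfl,
        abs_of_nonneg (gibbs_nonneg hμpos hμsum lam J τ)]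
      linarith [gibbs_le_one (h := h) hμpos hμsum lam J τ]
    | inr τ =>
      have : |h τ J| ≤ M := Finset.single_le_sum (f := fun τ => |h τ J|)
        (fun τ _ => abs_nonneg _) (mem_univ τ)
      calc |ev μ h lam J (Sum.inr τ)| = |h τ J| := rfl
        _ ≤ 1 + M := by linarith
  rw [eval_eq']
  calc |∑ m ∈ q.support, coeff m q * ∏ v, ev μ h lam J v ^ m v|
      ≤ ∑ m ∈ q.support, |coeff m q * ∏ v, ev μ h lam J v ^ m v| :=
        Finset.abs_sum_le_sum_abs _ _
    _ ≤ ∑ m ∈ q.support, |coeff m q| * (1 + M) ^ q.totalDegree := by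
        refine Finset.sum_le_sum fun m hm => ?_
        rw [abs_mul]
        refine mul_le_mul_of_nonneg_left ?_ (abs_nonneg _)
        rw [Finset.abs_prod]
        calc ∏ v, |ev μ h lam J v ^ m v| = ∏ v, |ev μ h lam J v| ^ m v := by
              exact Finset.prod_congr rfl fun v _ => abs_pow _ _
          _ ≤ ∏ v, (1 + M) ^ m v := by
              refine Finset.prod_le_prod (fun v _ => by positivity) fun v _ =>
                pow_le_pow_left₀ (abs_nonneg _) (hev v) _
          _ = (1 + M) ^ (∑ v, m v) := by rw [← Finset.prod_pow_eq_pow_sum]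
          _ ≤ (1 + M) ^ q.totalDegree := by
              refine pow_le_pow_right₀ hC1 ?_
              have h1 : ∑ v, m v = m.sum fun _ e => e := by
                rw [Finsupp.sum]
                refine (Finset.sum_subset (Finset.subset_univ _) fun v _ hv => ?_).symm
                exact Finsupp.notMem_support_iff.mp hv
              rw [h1]
              exact le_totalDegree hm
    _ = (∑ m ∈ q.support, |coeff m q|) * (1 + M) ^ q.totalDegree := by
        rw [Finset.sum_mul]

end Analysis

/-- The integral of the evaluated polynomial. -/
noncomputable def fintQ (ν : Measure ΩJ) (μ : ΩJ → Ωσ → ℝ) (h : Ωσ → ΩJ → ℝ)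
    (q : MvPolynomial (Ωσ ⊕ Ωσ) ℝ) (lam : ℝ) : ℝ :=
  ∫ J, eval (ev μ h lam J) q ∂ν

section Analysis2

variable {ν : Measure ΩJ} [IsProbabilityMeasure ν] {μ : ΩJ → Ωσ → ℝ} {h : Ωσ → ΩJ → ℝ}
  (hμmeas : ∀ σ : Ωσ, Measurable fun J => μ J σ)
  (hμpos : ∀ J, ∀ σ : Ωσ, 0 ≤ μ J σ) (hμsum : ∀ J, ∑ σ : Ωσ, μ J σ = 1)
  (hhmeas : ∀ σ : Ωσ, Measurable (h σ))
  (hgauss : ∀ a : Ωσ → ℝ, ∃ v : NNReal,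
      Measure.map (fun J => ∑ σ : Ωσ, a σ * h σ J) ν = gaussianReal 0 v)

include hμmeas hμpos hμsum hhmeas hgauss

lemma integrable_eval (lam : ℝ) (q : MvPolynomial (Ωσ ⊕ Ωσ) ℝ) :
    Integrable (fun J => eval (ev μ h lam J) q) ν := by
  refine ((integrable_one_add_M_pow hhmeas hgauss q.totalDegree).const_mul
    (∑ m ∈ q.support, |coeff m q|)).mono'
    (measurable_eval hμmeas hhmeas lam q).aestronglyMeasurable
    (Filter.Eventually.of_forall fun J => ?_)
  rw [Real.norm_eq_abs]
  exact abs_eval_le hμpos hμsum lam J q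

lemma hasDerivAt_fintQ (q : MvPolynomial (Ωσ ⊕ Ωσ) ℝ) (lam₀ : ℝ) :
    HasDerivAt (fintQ ν μ h q) (fintQ ν μ h (pD q) lam₀) lam₀ := by
  have key := hasDerivAt_integral_of_dominated_loc_of_deriv_le (μ := ν)
    (F := fun lam J => eval (ev μ h lam J) q)
    (F' := fun lam J => eval (ev μ h lam J) (pD q))
    (x₀ := lam₀)
    (bound := fun J => (∑ m ∈ (pD q).support, |coeff m (pD q)|)
      * (1 + ∑ τ : Ωσ, |h τ J|) ^ (pD q).totalDegree)
    (Metric.ball_mem_nhds lam₀ one_pos)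
    (Filter.Eventually.of_forall fun lam =>
      (measurable_eval hμmeas hhmeas lam q).aestronglyMeasurable)
    (integrable_eval hμmeas hμpos hμsum hhmeas hgauss lam₀ q)
    ((measurable_eval hμmeas hhmeas lam₀ (pD q)).aestronglyMeasurable)
    (Filter.Eventually.of_forall fun J lam _ => by
      rw [Real.norm_eq_abs]
      exact abs_eval_le hμpos hμsum lam J (pD q))
    ((integrable_one_add_M_pow hhmeas hgauss (pD q).totalDegree).const_mul _)
    (Filter.Eventually.of_forall fun J lam _ => hasDerivAt_eval hμpos hμsum lam J q)
  exact key.2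

lemma deriv_fintQ (q : MvPolynomial (Ωσ ⊕ Ωσ) ℝ) :
    deriv (fintQ ν μ h q) = fintQ ν μ h (pD q) :=
  funext fun lam => (hasDerivAt_fintQ hμmeas hμpos hμsum hhmeas hgauss q lam).deriv

lemma contDiffN_fintQ (n : ℕ) : ∀ q : MvPolynomial (Ωσ ⊕ Ωσ) ℝ,
    ContDiff ℝ (n : WithTop ℕ∞) (fintQ ν μ h q) := by
  induction n with
  | zero =>
    intro q
    rw [show ((0:ℕ) : WithTop ℕ∞) = 0 from Nat.cast_zero, contDiff_zero]
    have hdiff : Differentiable ℝ (fintQ ν μ h q) := fun x =>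
      (hasDerivAt_fintQ hμmeas hμpos hμsum hhmeas hgauss q x).differentiableAt
    exact hdiff.continuous
  | succ n ih =>
    intro q
    have hcast : ((n + 1 : ℕ) : WithTop ℕ∞) = ((n : ℕ) : WithTop ℕ∞) + 1 := by
      push_cast
      rfl
    rw [hcast, contDiff_succ_iff_deriv]
    refine ⟨fun lam =>
      (hasDerivAt_fintQ hμmeas hμpos hμsum hhmeas hgauss q lam).differentiableAt, ?_, ?_⟩
    · intro hcontra
      exfalso
      simp at hcontra
    · rw [deriv_fintQ hμmeas hμpos hμsum hhmeas hgauss q]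
      exact ih (pD q)

lemma contDiff_top_fintQ (q : MvPolynomial (Ωσ ⊕ Ωσ) ℝ) :
    ContDiff ℝ (⊤ : ℕ∞) (fintQ ν μ h q) := by
  rw [show ((⊤ : ℕ∞) : WithTop ℕ∞) = (⊤ : ℕ∞) from rfl]
  exact contDiff_infty.mpr fun n => contDiffN_fintQ hμmeas hμpos hμsum hhmeas hgauss n q

lemma iteratedDeriv_fintQ (k : ℕ) : ∀ q : MvPolynomial (Ωσ ⊕ Ωσ) ℝ,
    iteratedDeriv k (fintQ ν μ h q) = fintQ ν μ h (pD^[k] q) := by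
  induction k with
  | zero => intro q; simp [iteratedDeriv_zero]
  | succ k ih =>
    intro q
    rw [iteratedDeriv_succ', deriv_fintQ hμmeas hμpos hμsum hhmeas hgauss q, ih (pD q),
      Function.iterate_succ_apply]

end Analysis2

/-! ### Homogeneity in the `h`-variables -/

/-- weight: 0 on Gibbs variables, 1 on `h` variables. -/
def w2 : Ωσ ⊕ Ωσ → ℕ := Sum.elim (fun _ => 0) (fun _ => 1)

lemma weight_w2 (m : (Ωσ ⊕ Ωσ) →₀ ℕ) :
    Finsupp.weight w2 m = ∑ τ : Ωσ, m (Sum.inr τ) := by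
  rw [Finsupp.weight_apply, Finsupp.sum]
  rw [Finset.sum_subset (Finset.subset_univ m.support) (fun v _ hv => by
    rw [Finsupp.notMem_support_iff.mp hv, zero_smul])]
  rw [Fintype.sum_sum_type]
  simp [w2]

lemma homog_sub {p q : MvPolynomial (Ωσ ⊕ Ωσ) ℝ} {d : ℕ}
    (hp : p.IsWeightedHomogeneous w2 d) (hq : q.IsWeightedHomogeneous w2 d) :
    (p - q).IsWeightedHomogeneous w2 d := by
  intro m hm
  rw [MvPolynomial.coeff_sub] at hm
  by_cases h1 : coeff m p ≠ 0
  · exact hp h1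
  · push_neg at h1
    rw [h1, zero_sub, neg_ne_zero] at hm
    exact hq hm

lemma homog_pderiv {q : MvPolynomial (Ωσ ⊕ Ωσ) ℝ} {d : ℕ}
    (hq : q.IsWeightedHomogeneous w2 d) (τ : Ωσ) :
    (pderiv (Sum.inl τ) q).IsWeightedHomogeneous w2 d := by
  classical
  have hrw : pderiv (Sum.inl τ) q = ∑ m ∈ q.support,
      monomial (m - Finsupp.single (Sum.inl τ) 1) (coeff m q * m (Sum.inl τ)) := by
    conv_lhs => rw [← support_sum_monomial_coeff q]
    rw [map_sum]
    exact Finset.sum_congr rfl fun m _ => pderiv_monomial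
  rw [hrw]
  refine MvPolynomial.IsWeightedHomogeneous.sum _ _ _ fun m hm => ?_
  refine isWeightedHomogeneous_monomial _ _ _ ?_
  have hw : Finsupp.weight w2 m = d := hq (MvPolynomial.mem_support_iff.mp hm)
  rw [weight_w2] at hw ⊢
  rw [← hw]
  refine Finset.sum_congr rfl fun τ' _ => ?_
  rw [Finsupp.tsub_apply, Finsupp.single_apply, if_neg (by simp), tsub_zero]

lemma homog_pD {q : MvPolynomial (Ωσ ⊕ Ωσ) ℝ} {d : ℕ}
    (hq : q.IsWeightedHomogeneous w2 d) :
    (pD q).IsWeightedHomogeneous w2 (d + 1) := by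
  unfold pD
  refine MvPolynomial.IsWeightedHomogeneous.sum _ _ _ fun τ _ => ?_
  have hXinl : ∀ s : Ωσ, (X (Sum.inl s) : MvPolynomial (Ωσ ⊕ Ωσ) ℝ).IsWeightedHomogeneous w2 0 :=
    fun s => isWeightedHomogeneous_X ℝ w2 (Sum.inl s)
  have hXinr : ∀ s : Ωσ, (X (Sum.inr s) : MvPolynomial (Ωσ ⊕ Ωσ) ℝ).IsWeightedHomogeneous w2 1 :=
    fun s => isWeightedHomogeneous_X ℝ w2 (Sum.inr s)
  have hmult : (X (Sum.inl τ) * (X (Sum.inr τ)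
      - ∑ s : Ωσ, X (Sum.inl s) * X (Sum.inr s)) :
      MvPolynomial (Ωσ ⊕ Ωσ) ℝ).IsWeightedHomogeneous w2 1 := by
    have hsum : ((∑ s : Ωσ, X (Sum.inl s) * X (Sum.inr s)) :
        MvPolynomial (Ωσ ⊕ Ωσ) ℝ).IsWeightedHomogeneous w2 1 := by
      refine MvPolynomial.IsWeightedHomogeneous.sum _ _ _ fun s _ => ?_
      have := (hXinl s).mul (hXinr s)
      simpa using this
    have hsub := homog_sub (hXinr τ) hsum
    have := (hXinl τ).mul hsub
    simpa using this
  have := (homog_pderiv hq τ).mul hmult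
  exact this

/-! ### Vanishing at `lam = 0` for odd homogeneity degree -/

section Vanish

variable {ν : Measure ΩJ} [IsProbabilityMeasure ν] {μ : ΩJ → Ωσ → ℝ} {h : Ωσ → ΩJ → ℝ}

lemma ev_zero (hμsum : ∀ J, ∑ σ : Ωσ, μ J σ = 1) (J : ΩJ) :
    ev μ h 0 J = Sum.elim (fun τ => μ J τ) (fun τ => h τ J) := by
  funext v
  cases v with
  | inl τ =>
    show gibbs μ h 0 J τ = μ J τ
    rw [gibbs]
    simp [hμsum J]
  | inr τ => rfl

lemma fintQ_zero_of_odd_homog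
    (hμmeas : ∀ σ : Ωσ, Measurable fun J => μ J σ)
    (hμpos : ∀ J, ∀ σ : Ωσ, 0 ≤ μ J σ) (hμsum : ∀ J, ∑ σ : Ωσ, μ J σ = 1)
    (hhmeas : ∀ σ : Ωσ, Measurable (h σ))
    (hgauss : ∀ a : Ωσ → ℝ, ∃ v : NNReal,
      Measure.map (fun J => ∑ σ : Ωσ, a σ * h σ J) ν = gaussianReal 0 v)
    (hindep : Indep (MeasurableSpace.comap (fun J => fun σ : Ωσ => h σ J) inferInstance)
      (MeasurableSpace.comap (fun J => fun σ : Ωσ => μ J σ) inferInstance) ν)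
    {q : MvPolynomial (Ωσ ⊕ Ωσ) ℝ} {k : ℕ} (hk : Odd k)
    (hq : q.IsWeightedHomogeneous w2 k) :
    fintQ ν μ h q 0 = 0 := by
  classical
  have hμle : ∀ J τ, μ J τ ≤ 1 := by
    intro J τ
    calc μ J τ ≤ ∑ σ : Ωσ, μ J σ :=
          Finset.single_le_sum (fun s _ => hμpos J s) (mem_univ τ)
      _ = 1 := hμsum J
  -- expand the evaluation as a sum of monomials
  have hexp : ∀ J, eval (ev μ h 0 J) q = ∑ m ∈ q.support,
      coeff m q * ((∏ τ : Ωσ, μ J τ ^ m (Sum.inl τ)) * ∏ τ : Ωσ, h τ J ^ m (Sum.inr τ)) := by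
    intro J
    rw [ev_zero hμsum J, eval_eq']
    refine Finset.sum_congr rfl fun m _ => ?_
    congr 1
    rw [Fintype.prod_sum_type]
    rfl
  have hdeg : ∀ m ∈ q.support, ∑ τ : Ωσ, m (Sum.inr τ) = k := by
    intro m hm
    have := hq (MvPolynomial.mem_support_iff.mp hm)
    rw [weight_w2] at this
    exact this
  have hWmeas : ∀ m : (Ωσ ⊕ Ωσ) →₀ ℕ,
      Measurable fun J => ∏ τ : Ωσ, μ J τ ^ m (Sum.inl τ) :=
    fun m => Finset.measurable_prod _ fun τ _ => (hμmeas τ).pow_const _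
  have hHmeas : ∀ m : (Ωσ ⊕ Ωσ) →₀ ℕ,
      Measurable fun J => ∏ τ : Ωσ, h τ J ^ m (Sum.inr τ) :=
    fun m => Finset.measurable_prod _ fun τ _ => (hhmeas τ).pow_const _
  have hWbound : ∀ m : (Ωσ ⊕ Ωσ) →₀ ℕ, ∀ J,
      0 ≤ (∏ τ : Ωσ, μ J τ ^ m (Sum.inl τ)) ∧ (∏ τ : Ωσ, μ J τ ^ m (Sum.inl τ)) ≤ 1 := by
    intro m J
    constructor
    · exact Finset.prod_nonneg fun τ _ => pow_nonneg (hμpos J τ) _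
    · refine Finset.prod_le_one (fun τ _ => pow_nonneg (hμpos J τ) _) fun τ _ =>
        pow_le_one₀ (hμpos J τ) (hμle J τ)
  have hWint : ∀ m : (Ωσ ⊕ Ωσ) →₀ ℕ,
      Integrable (fun J => ∏ τ : Ωσ, μ J τ ^ m (Sum.inl τ)) ν := by
    intro m
    refine (integrable_const (1:ℝ)).mono' (hWmeas m).aestronglyMeasurable
      (Filter.Eventually.of_forall fun J => ?_)
    rw [Real.norm_eq_abs, abs_of_nonneg (hWbound m J).1]
    exact (hWbound m J).2
  have hHint : ∀ m : (Ωσ ⊕ Ωσ) →₀ ℕ,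
      Integrable (fun J => ∏ τ : Ωσ, h τ J ^ m (Sum.inr τ)) ν :=
    fun m => integrable_prod_pow hhmeas hgauss _
  have hterm_int : ∀ m : (Ωσ ⊕ Ωσ) →₀ ℕ,
      Integrable (fun J => (∏ τ : Ωσ, μ J τ ^ m (Sum.inl τ))
        * ∏ τ : Ωσ, h τ J ^ m (Sum.inr τ)) ν := by
    intro m
    refine (hHint m).abs.mono' ((hWmeas m).mul (hHmeas m)).aestronglyMeasurable
      (Filter.Eventually.of_forall fun J => ?_)
    rw [Real.norm_eq_abs, abs_mul, abs_of_nonneg (hWbound m J).1]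
    calc (∏ τ : Ωσ, μ J τ ^ m (Sum.inl τ)) * |∏ τ : Ωσ, h τ J ^ m (Sum.inr τ)|
        ≤ 1 * |∏ τ : Ωσ, h τ J ^ m (Sum.inr τ)| :=
          mul_le_mul_of_nonneg_right (hWbound m J).2 (abs_nonneg _)
      _ = |∏ τ : Ωσ, h τ J ^ m (Sum.inr τ)| := one_mul _
  -- independence
  have hIF : IndepFun (fun J => fun σ : Ωσ => h σ J) (fun J => fun σ : Ωσ => μ J σ) ν :=
    hindep
  rw [fintQ]
  have hfun : (fun J => eval (ev μ h 0 J) q) = fun J => ∑ m ∈ q.support,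
      coeff m q * ((∏ τ : Ωσ, μ J τ ^ m (Sum.inl τ)) * ∏ τ : Ωσ, h τ J ^ m (Sum.inr τ)) :=
    funext hexp
  rw [hfun, integral_finset_sum _ (fun m _ => (hterm_int m).const_mul _)]
  refine Finset.sum_eq_zero fun m hm => ?_
  rw [integral_const_mul]
  have hIF2 : IndepFun (fun J => ∏ τ : Ωσ, h τ J ^ m (Sum.inr τ))
      (fun J => ∏ τ : Ωσ, μ J τ ^ m (Sum.inl τ)) ν := by
    have := hIF.comp (φ := fun x : Ωσ → ℝ => ∏ τ : Ωσ, x τ ^ m (Sum.inr τ))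
      (ψ := fun x : Ωσ → ℝ => ∏ τ : Ωσ, x τ ^ m (Sum.inl τ))
      (Finset.measurable_prod _ fun τ _ => (measurable_pi_apply τ).pow_const _)
      (Finset.measurable_prod _ fun τ _ => (measurable_pi_apply τ).pow_const _)
    exact this
  have hprod : ∫ J, (∏ τ : Ωσ, h τ J ^ m (Sum.inr τ)) * ∏ τ : Ωσ, μ J τ ^ m (Sum.inl τ) ∂ν
      = (∫ J, ∏ τ : Ωσ, h τ J ^ m (Sum.inr τ) ∂ν) * ∫ J, ∏ τ : Ωσ, μ J τ ^ m (Sum.inl τ) ∂ν := by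
    have hp := hIF2.integral_fun_mul_eq_mul_integral (hHint m).aestronglyMeasurable (hWint m).aestronglyMeasurable
    simpa [Pi.mul_apply] using hp
  have hH0 : ∫ J, ∏ τ : Ωσ, h τ J ^ m (Sum.inr τ) ∂ν = 0 :=
    mixed_moment_odd hhmeas hgauss _ (by rw [hdeg m hm]; exact hk)
  have hcomm : ∫ J, (∏ τ : Ωσ, μ J τ ^ m (Sum.inl τ)) * ∏ τ : Ωσ, h τ J ^ m (Sum.inr τ) ∂ν
      = ∫ J, (∏ τ : Ωσ, h τ J ^ m (Sum.inr τ)) * ∏ τ : Ωσ, μ J τ ^ m (Sum.inl τ) ∂ν := by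
    congr 1
    funext J
    ring
  rw [hcomm, hprod, hH0, zero_mul, mul_zero]

end Vanish

end QSOD


/-- For every overlap monomial `G` on `R` replicas, `λ ↦ E_{λh}(G)` is
infinitely differentiable on `ℝ` and all of its odd-order derivatives at `λ = 0` vanish. -/
theorem qE_smooth_odd_derivs_vanish
    {Ωσ : Type} [Fintype Ωσ] [Nonempty Ωσ]
    {ΩJ : Type} [MeasurableSpace ΩJ] (ν : Measure ΩJ) [IsProbabilityMeasure ν]
    (μ : ΩJ → Ωσ → ℝ) (h : Ωσ → ΩJ → ℝ) (c : Ωσ → Ωσ → ℝ)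
    (hμmeas : ∀ σ : Ωσ, Measurable fun J => μ J σ)
    (hμpos : ∀ J, ∀ σ : Ωσ, 0 ≤ μ J σ) (hμsum : ∀ J, ∑ σ : Ωσ, μ J σ = 1)
    (hhmeas : ∀ σ : Ωσ, Measurable (h σ))
    (hgauss : ∀ a : Ωσ → ℝ, ∃ v : NNReal,
      Measure.map (fun J => ∑ σ : Ωσ, a σ * h σ J) ν = gaussianReal 0 v)
    (hcov : ∀ σ σ' : Ωσ, c σ σ' = ∫ J, h σ J * h σ' J ∂ν)
    (hnorm : ∀ σ : Ωσ, c σ σ = 1)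
    (hindep : Indep (MeasurableSpace.comap (fun J => fun σ : Ωσ => h σ J) inferInstance)
      (MeasurableSpace.comap (fun J => fun σ : Ωσ => μ J σ) inferInstance) ν)
    (R : ℕ) (m : Fin R → Fin R → ℕ) :
    ContDiff ℝ (⊤ : ℕ∞) (fun lam => qE ν μ h lam R fun σ _ => overlapMonomial c R m σ) ∧
    ∀ k : ℕ, Odd k →
      iteratedDeriv k (fun lam => qE ν μ h lam R fun σ _ => overlapMonomial c R m σ) 0 = 0 := by
  classical
  set qG : MvPolynomial (Ωσ ⊕ Ωσ) ℝ :=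
    ∑ σs : Fin R → Ωσ, MvPolynomial.C (overlapMonomial c R m σs)
      * ∏ r, MvPolynomial.X (Sum.inl (σs r)) with hqG
  have hqE : (fun lam => qE ν μ h lam R fun σ _ => overlapMonomial c R m σ)
      = QSOD.fintQ ν μ h qG := by
    funext lam
    simp only [qE, QSOD.fintQ]
    congr 1
    funext J
    rw [hqG, map_sum]
    refine Finset.sum_congr rfl fun σs _ => ?_
    rw [map_mul, MvPolynomial.eval_C, map_prod]
    simp only [MvPolynomial.eval_X]
    rfl
  rw [hqE]
  constructor
  · exact QSOD.contDiff_top_fintQ hμmeas hμpos hμsum hhmeas hgauss qG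
  · intro k hk
    rw [QSOD.iteratedDeriv_fintQ hμmeas hμpos hμsum hhmeas hgauss k qG]
    have hhom0 : qG.IsWeightedHomogeneous QSOD.w2 0 := by
      rw [hqG]
      refine MvPolynomial.IsWeightedHomogeneous.sum _ _ _ fun σs _ => ?_
      have h1 : (MvPolynomial.C (overlapMonomial c R m σs) :
          MvPolynomial (Ωσ ⊕ Ωσ) ℝ).IsWeightedHomogeneous QSOD.w2 0 :=
        MvPolynomial.isWeightedHomogeneous_C _ _
      have h2 : ((∏ r, MvPolynomial.X (Sum.inl (σs r))) :
          MvPolynomial (Ωσ ⊕ Ωσ) ℝ).IsWeightedHomogeneous QSOD.w2 0 := by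
        have hp := MvPolynomial.IsWeightedHomogeneous.prod (Finset.univ : Finset (Fin R))
          (fun r : Fin R => MvPolynomial.X (Sum.inl (σs r))) (fun _ => 0)
          (fun r _ => MvPolynomial.isWeightedHomogeneous_X ℝ QSOD.w2 (Sum.inl (σs r)))
        simpa using hp
      have h3 := h1.mul h2
      simpa using h3
    have hhomk : (QSOD.pD^[k] qG).IsWeightedHomogeneous QSOD.w2 k := by
      clear hk
      induction k with
      | zero => simpa using hhom0
      | succ k ih =>
        rw [Function.iterate_succ_apply']
        exact QSOD.homog_pD ih
    exact QSOD.fintQ_zero_of_odd_homog hμmeas hμpos hμsum hhmeas hgauss hindep hk hhomk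
end

section
/- Wick's theorem (Isserlis): let (X_1,…,X_n) be a centered jointly Gaussian random vector. If n is odd then E[X_1⋯X_n] = 0. If n = 2m then E[X_1⋯X_{2m}] = Σ_π ∏_{i=1}^m E[X_{π(2i−1)} X_{π(2i)}], where the sum runs over all (2m−1)!! pairings π, i.e. permutations π of {1,…,2m} with π(2i−1) < π(2i) for all i and π(1) < π(3) < ⋯ < π(2m−1). -/
open MeasureTheory ProbabilityTheory Finset
open scoped Classical

section WickPrep
open Real Set Filter

noncomputable def J (k : ℕ) : ℝ := ∫ x in Ioi (0:ℝ), x ^ k * Real.exp (-x^2/2)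

lemma J_int (k : ℕ) : IntegrableOn (fun x : ℝ => x ^ k * Real.exp (-x^2/2)) (Ioi 0) := by
  have h := integrableOn_rpow_mul_exp_neg_mul_sq (b := 1/2) (by norm_num) (s := (k:ℝ))
    (lt_of_lt_of_le (by norm_num) (Nat.cast_nonneg k))
  refine h.congr_fun (fun x hx => ?_) measurableSet_Ioi
  simp only [Real.rpow_natCast]
  ring_nf

lemma J_rec (k : ℕ) : J (k + 2) = (k + 1) * J k := by
  have hderiv : ∀ x ∈ Ici (0:ℝ), HasDerivAt (fun x : ℝ => x ^ (k+1) * Real.exp (-x^2/2))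
      ((k+1) * x ^ k * Real.exp (-x^2/2) - x ^ (k+2) * Real.exp (-x^2/2)) x := by
    intro x _
    have h1 : HasDerivAt (fun x : ℝ => x ^ (k+1)) (((k:ℝ)+1) * x ^ k) x := by
      simpa using hasDerivAt_pow (k+1) x
    have h2 : HasDerivAt (fun x : ℝ => Real.exp (-x^2/2)) (-x * Real.exp (-x^2/2)) x := by
      have h3 : HasDerivAt (fun x : ℝ => -x^2/2) (-x) x := by
        have := ((hasDerivAt_pow 2 x).neg).div_const 2
        refine this.congr_deriv ?_
        push_cast; ring
      simpa [mul_comm] using h3.exp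
    have := h1.mul h2
    refine this.congr_deriv ?_
    ring
  have hint : IntegrableOn (fun x : ℝ => (k+1) * x ^ k * Real.exp (-x^2/2) - x ^ (k+2) * Real.exp (-x^2/2)) (Ioi 0) := by
    refine IntegrableOn.congr_fun (((J_int k).const_mul ((k:ℝ)+1)).sub (J_int (k+2))) ?_ measurableSet_Ioi
    intro x _
    simp [Pi.sub_apply]
    ring
  have htend : Tendsto (fun x : ℝ => x ^ (k+1) * Real.exp (-x^2/2)) atTop (nhds 0) := by
    have h := rpow_mul_exp_neg_mul_sq_isLittleO_exp_neg (b := 1/2) (by norm_num) (k+1)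
    have h2 : (fun x : ℝ => x ^ ((k:ℝ)+1) * Real.exp (-(1/2) * x^2)) =ᶠ[atTop] (fun x : ℝ => x ^ (k+1) * Real.exp (-x^2/2)) := by
      filter_upwards [eventually_gt_atTop (0:ℝ)] with x hx
      rw [show ((k:ℝ)+1) = ((k+1 : ℕ) : ℝ) by push_cast; ring, Real.rpow_natCast]
      ring_nf
    refine Tendsto.congr' h2 ?_
    refine h.trans_tendsto ?_
    exact Real.tendsto_exp_atBot.comp (tendsto_id.const_mul_atTop_of_neg (by norm_num : ((-(1/2)):ℝ) < 0))
  have key := integral_Ioi_of_hasDerivAt_of_tendsto' hderiv hint htend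
  norm_num at key
  rw [integral_sub (IntegrableOn.congr_fun ((J_int k).const_mul ((k:ℝ)+1)) (fun x _ => by ring) measurableSet_Ioi) (J_int (k+2))] at key
  have h3 : ∫ x in Ioi (0:ℝ), ((k:ℝ)+1) * x ^ k * Real.exp (-x^2/2) = ((k:ℝ)+1) * J k := by
    rw [J, ← integral_const_mul]
    congr 1; ext x; ring
  rw [h3] at key
  unfold J at key ⊢
  linarith

noncomputable def Mom (k : ℕ) (v : NNReal) : ℝ := ∫ x, x ^ k ∂(gaussianReal 0 v)

lemma gaussianPDFReal_zero_eq (v : NNReal) (x : ℝ) :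
    gaussianPDFReal 0 v x = (Real.sqrt (2 * Real.pi * v))⁻¹ * Real.exp (-(2*(v:ℝ))⁻¹ * x^2) := by
  rw [gaussianPDFReal]
  congr 1
  rw [sub_zero]
  congr 1
  by_cases hv : (v:ℝ) = 0
  · simp [hv]
  · field_simp

lemma integrable_pdf_mul (v : NNReal) (hv : v ≠ 0) (k : ℕ) :
    Integrable (fun x : ℝ => gaussianPDFReal 0 v x * x ^ k) := by
  have hb : (0:ℝ) < (2*(v:ℝ))⁻¹ := by
    have h0 : (0:ℝ) < (v:ℝ) := lt_of_le_of_ne (v.coe_nonneg) (by exact_mod_cast (Ne.symm hv))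
    positivity
  have h := integrable_rpow_mul_exp_neg_mul_sq (b := (2*(v:ℝ))⁻¹) hb (s := (k:ℝ))
    (lt_of_lt_of_le (by norm_num) (Nat.cast_nonneg k))
  have h2 := h.const_mul ((Real.sqrt (2 * Real.pi * v))⁻¹)
  refine h2.congr (Filter.Eventually.of_forall (fun x => ?_))
  simp only [gaussianPDFReal_zero_eq, Real.rpow_natCast]
  ring

lemma integral_gaussianReal_eq (v : NNReal) (hv : v ≠ 0) (f : ℝ → ℝ) :
    ∫ x, f x ∂(gaussianReal 0 v) = ∫ x, gaussianPDFReal 0 v x * f x := by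
  rw [gaussianReal_of_var_ne_zero 0 hv]
  have hm : Measurable (fun x => (gaussianPDFReal 0 v x).toNNReal) :=
    (measurable_gaussianPDFReal 0 v).real_toNNReal
  have : gaussianPDF 0 v = fun x => ((gaussianPDFReal 0 v x).toNNReal : ENNReal) := by
    ext x
    rw [gaussianPDF_def]
    rfl
  rw [this, integral_withDensity_eq_integral_smul hm]
  congr 1
  ext x
  simp only [NNReal.smul_def, smul_eq_mul, Real.coe_toNNReal _ (gaussianPDFReal_nonneg 0 v x)]

lemma integrable_pow_gaussianReal (v : NNReal) (k : ℕ) :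
    Integrable (fun x : ℝ => x ^ k) (gaussianReal 0 v) := by
  by_cases hv : v = 0
  · rw [hv, gaussianReal_zero_var]
    refine ⟨(measurable_id.pow_const k).aestronglyMeasurable, ?_⟩
    simp only [HasFiniteIntegral, lintegral_dirac]
    exact ENNReal.coe_lt_top
  · rw [gaussianReal_of_var_ne_zero 0 hv]
    have hm : Measurable (fun x => (gaussianPDFReal 0 v x).toNNReal) :=
      (measurable_gaussianPDFReal 0 v).real_toNNReal
    have : gaussianPDF 0 v = fun x => ((gaussianPDFReal 0 v x).toNNReal : ENNReal) := by
      ext x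
      rw [gaussianPDF_def]
      rfl
    rw [this, integrable_withDensity_iff_integrable_smul hm]
    refine (integrable_pdf_mul v hv k).congr (Filter.Eventually.of_forall (fun x => ?_))
    simp only [NNReal.smul_def, smul_eq_mul, Real.coe_toNNReal _ (gaussianPDFReal_nonneg 0 v x)]

lemma Mom_scale (v : NNReal) (k : ℕ) : Mom k v = (Real.sqrt v)^k * Mom k 1 := by
  have hmap : (gaussianReal 0 1).map ((Real.sqrt v) * ·) = gaussianReal 0 v := by
    rw [gaussianReal_map_const_mul (Real.sqrt v)]
    congr 1
    · ring
    · ext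
      simp [Real.sq_sqrt v.coe_nonneg]
  rw [Mom, ← hmap, integral_map (by fun_prop) (by fun_prop)]
  simp only [mul_pow]
  rw [integral_const_mul]
  rfl

lemma Mom_odd (v : NNReal) {k : ℕ} (hk : Odd k) : Mom k v = 0 := by
  have hmap : (gaussianReal 0 v).map ((-1 : ℝ) * ·) = gaussianReal 0 v := by
    rw [gaussianReal_map_const_mul (-1 : ℝ)]
    congr 1
    · ring
    · ext
      simp
  have : Mom k v = -Mom k v := by
    conv_lhs => rw [Mom, ← hmap, integral_map (by fun_prop) (by fun_prop)]
    simp only [mul_pow, hk.neg_one_pow]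
    rw [integral_const_mul]
    simp [Mom]
  linarith

lemma Mom_even_J {j : ℕ} (hj : Even j) : Mom j 1 = (Real.sqrt (2*Real.pi))⁻¹ * (2 * J j) := by
  rw [Mom, integral_gaussianReal_eq 1 one_ne_zero]
  have : ∀ x : ℝ, gaussianPDFReal 0 1 x * x ^ j
      = (fun t : ℝ => (Real.sqrt (2*Real.pi))⁻¹ * (t ^ j * Real.exp (-t^2/2))) |x| := by
    intro x
    simp only [gaussianPDFReal_zero_eq]
    rw [hj.pow_abs, sq_abs]
    norm_num
    ring_nf
  rw [show (fun x : ℝ => gaussianPDFReal 0 1 x * x ^ j)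
      = fun x : ℝ => (fun t : ℝ => (Real.sqrt (2*Real.pi))⁻¹ * (t ^ j * Real.exp (-t^2/2))) |x| from funext this]
  rw [integral_comp_abs (f := fun t : ℝ => (Real.sqrt (2*Real.pi))⁻¹ * (t ^ j * Real.exp (-t^2/2))), MeasureTheory.integral_const_mul]
  rw [J]
  ring

lemma Mom_one_rec (m : ℕ) : Mom (2*m+2) 1 = (2*m+1) * Mom (2*m) 1 := by
  rw [Mom_even_J (by exact ⟨m+1, by ring⟩), Mom_even_J (by exact ⟨m, by ring⟩), J_rec]
  push_cast
  ring

lemma Mom_zero (v : NNReal) : Mom 0 v = 1 := by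
  simp [Mom]

lemma Mom_fact (m : ℕ) : Mom (2*m) 1 * (m.factorial * 2^m) = (2*m).factorial := by
  induction m with
  | zero => simp [Mom_zero]
  | succ m ih =>
    have h1 : 2*(m+1) = 2*m+2 := by ring
    rw [show 2*(m+1) = 2*m+2 from by ring, Mom_one_rec]
    have h2 : ((m+1).factorial : ℝ) = (m+1) * m.factorial := by
      rw [Nat.factorial_succ]; push_cast; ring
    have h3 : ((2*m+2).factorial : ℝ) = (2*m+2) * (2*m+1) * (2*m).factorial := by
      rw [show 2*m+2 = (2*m+1)+1 by ring, Nat.factorial_succ, Nat.factorial_succ]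
      push_cast; ring
    rw [h2, h3, ← ih]
    push_cast
    ring

lemma Mom_even (v : NNReal) (m : ℕ) : Mom (2*m) v = Mom (2*m) 1 * (v:ℝ)^m := by
  rw [Mom_scale]
  rw [show (Real.sqrt v)^(2*m) = ((Real.sqrt v)^2)^m by rw [← pow_mul]]
  rw [Real.sq_sqrt v.coe_nonneg]
  ring

lemma Mom_two (v : NNReal) : Mom 2 v = (v : ℝ) := by
  have := Mom_even v 1
  have h2 : Mom 2 1 = 1 := by
    have := Mom_one_rec 0
    simp [Mom_zero] at this
    simpa using this
  simp only [show 2*1 = 2 from rfl] at this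
  rw [this, h2]
  simp

end WickPrep

theorem Equiv.Perm.apply_inv_self {α : Type*} (f : Equiv.Perm α) (x : α) : f (f⁻¹ x) = x :=
  Equiv.apply_symm_apply f x

namespace WickAux

noncomputable def sgn (b : Bool) : ℝ := if b then 1 else -1

lemma sum_sgn_pow (e : ℕ) : (∑ t : Bool, sgn t ^ e) = if Even e then 2 else 0 := by
  rw [Fintype.sum_bool]
  simp only [sgn, Bool.false_eq_true, if_true, if_false, one_pow]
  by_cases h : Even e
  · rw [h.neg_one_pow, if_pos h]; norm_num
  · rw [(Nat.not_even_iff_odd.mp h).neg_one_pow, if_neg h]; norm_num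

lemma fiber_card_one_of_odd {α : Type*} [Fintype α] {N : ℕ}
    (hcard : Fintype.card α = N) (G : α → Fin N)
    (h : ∀ i : Fin N, Odd ((univ.filter (fun u => G u = i)).card)) :
    ∀ i : Fin N, (univ.filter (fun u => G u = i)).card = 1 := by
  have hsum : ∑ i : Fin N, (univ.filter (fun u => G u = i)).card = N := by
    rw [← Finset.card_eq_sum_card_fiberwise (fun u (_ : u ∈ univ) => Finset.mem_univ (G u))]
    simpa using hcard
  have hge : ∀ i : Fin N, 1 ≤ (univ.filter (fun u => G u = i)).card := by
    intro i
    rcases h i with ⟨t, ht⟩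
    omega
  by_contra hne
  push_neg at hne
  obtain ⟨i0, hi0⟩ := hne
  have hlt : (∑ _i : Fin N, 1) < ∑ i : Fin N, (univ.filter (fun u => G u = i)).card := by
    refine Finset.sum_lt_sum (fun i _ => hge i) ⟨i0, Finset.mem_univ _, ?_⟩
    exact lt_of_le_of_ne (hge i0) (Ne.symm hi0)
  simp only [Finset.sum_const, Finset.card_univ, Fintype.card_fin, smul_eq_mul, mul_one] at hlt
  omega

lemma odd_fibers_iff_bij {α : Type*} [Fintype α] {N : ℕ}
    (hcard : Fintype.card α = N) (G : α → Fin N) :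
    (∀ i : Fin N, Odd ((univ.filter (fun u => G u = i)).card)) ↔ Function.Bijective G := by
  constructor
  · intro h
    have h1 := fiber_card_one_of_odd hcard G h
    constructor
    · intro u u' huu
      have hu : u ∈ univ.filter (fun w => G w = G u) := by simp
      have hu' : u' ∈ univ.filter (fun w => G w = G u) := by simp [huu]
      have := Finset.card_le_one.mp (le_of_eq (h1 (G u))) u hu u' hu'
      exact this
    · intro i
      have := h1 i
      obtain ⟨u, hu⟩ := Finset.card_eq_one.mp this
      have : u ∈ univ.filter (fun w => G w = i) := by rw [hu]; exact Finset.mem_singleton_self u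
      exact ⟨u, (Finset.mem_filter.mp this).2⟩
  · intro hG i
    let e := Equiv.ofBijective G hG
    have : univ.filter (fun u => G u = i) = {e.symm i} := by
      ext u
      simp only [Finset.mem_filter, Finset.mem_univ, true_and, Finset.mem_singleton]
      constructor
      · intro hu; have : e u = i := hu; rw [← this]; simp [e]
      · intro hu; rw [hu]; exact e.apply_symm_apply i
    rw [this]
    simp

/-- Core sign-sum lemma. -/
lemma signSum {α : Type*} [Fintype α] {N : ℕ} (hcard : Fintype.card α = N) (G : α → Fin N) :
    ∑ ε : Fin N → Bool, (∏ i, sgn (ε i)) * (∏ u : α, sgn (ε (G u)))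
      = if Function.Bijective G then (2:ℝ)^N else 0 := by
  have hfib : ∀ ε : Fin N → Bool, (∏ u : α, sgn (ε (G u)))
      = ∏ i : Fin N, sgn (ε i) ^ ((univ.filter (fun u => G u = i)).card) := by
    intro ε
    rw [← Finset.prod_fiberwise_of_maps_to (fun u (_ : u ∈ univ) => Finset.mem_univ (G u))
      (fun u => sgn (ε (G u)))]
    refine Finset.prod_congr rfl (fun i _ => ?_)
    rw [Finset.prod_congr rfl (fun u hu => by rw [(Finset.mem_filter.mp hu).2]), Finset.prod_const]
  have hstep : ∀ ε : Fin N → Bool, (∏ i, sgn (ε i)) * (∏ u : α, sgn (ε (G u)))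
      = ∏ i : Fin N, sgn (ε i) ^ (1 + (univ.filter (fun u => G u = i)).card) := by
    intro ε
    rw [hfib, ← Finset.prod_mul_distrib]
    refine Finset.prod_congr rfl (fun i _ => ?_)
    rw [pow_add, pow_one]
  calc ∑ ε : Fin N → Bool, (∏ i, sgn (ε i)) * (∏ u : α, sgn (ε (G u)))
      = ∑ ε : Fin N → Bool, ∏ i : Fin N, sgn (ε i) ^ (1 + (univ.filter (fun u => G u = i)).card) := by
        exact Finset.sum_congr rfl (fun ε _ => hstep ε)
    _ = ∏ i : Fin N, ∑ t : Bool, sgn t ^ (1 + (univ.filter (fun u => G u = i)).card) := by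
        rw [Finset.prod_univ_sum]
        rw [← Fintype.piFinset_univ]
    _ = ∏ i : Fin N, if Even (1 + (univ.filter (fun u => G u = i)).card) then (2:ℝ) else 0 := by
        exact Finset.prod_congr rfl (fun i _ => sum_sgn_pow _)
    _ = if Function.Bijective G then (2:ℝ)^N else 0 := by
        by_cases h : Function.Bijective G
        · rw [if_pos h]
          have hodd := (odd_fibers_iff_bij hcard G).mpr h
          rw [Finset.prod_congr rfl (fun i _ => if_pos ?_), Finset.prod_const]
          · simp
          · rw [add_comm, Nat.even_add_one, Nat.not_even_iff_odd]
            exact hodd i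
        · rw [if_neg h]
          have := (not_iff_not.mpr (odd_fibers_iff_bij hcard G)).mpr h
          push_neg at this
          obtain ⟨i0, hi0⟩ := this
          refine Finset.prod_eq_zero (Finset.mem_univ i0) ?_
          rw [if_neg]
          rw [add_comm, Nat.even_add_one, Nat.not_even_iff_odd]
          simpa using hi0

variable {m : ℕ}

def pa (m : ℕ) (k : Fin m) : Fin (2*m) := ⟨2*k, by omega⟩
def pb (m : ℕ) (k : Fin m) : Fin (2*m) := ⟨2*k+1, by omega⟩

def pe (m : ℕ) : Fin (2*m) ≃ Fin m × Bool where
  toFun t := (⟨t.val / 2, by have := t.isLt; omega⟩, decide (t.val % 2 = 1))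
  invFun p := if p.2 then pb m p.1 else pa m p.1
  left_inv t := by
    have ht := t.isLt
    by_cases h : t.val % 2 = 1 <;>
      simp [h, pa, pb, Fin.ext_iff] <;> omega
  right_inv p := by
    rcases p with ⟨k, t⟩
    cases t
    · simp only [if_false, pa]
      refine Prod.ext (Fin.ext ?_) ?_ <;> simp <;> omega
    · simp only [if_true, pb]
      refine Prod.ext (Fin.ext ?_) ?_ <;> simp <;> omega

lemma pe_pa (k : Fin m) : pe m (pa m k) = (k, false) := by
  refine Prod.ext (Fin.ext ?_) ?_ <;> simp [pe, pa] <;> omega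

lemma pe_pb (k : Fin m) : pe m (pb m k) = (k, true) := by
  refine Prod.ext (Fin.ext ?_) ?_ <;> simp [pe, pb] <;> omega

lemma pe_symm_apply (k : Fin m) (t : Bool) : (pe m).symm (k, t) = if t then pb m k else pa m k := rfl

lemma perm_ext_ab {g g' : Equiv.Perm (Fin (2*m))}
    (ha : ∀ k, g (pa m k) = g' (pa m k)) (hb : ∀ k, g (pb m k) = g' (pb m k)) : g = g' := by
  refine Equiv.ext (fun t => ?_)
  have h := (pe m).symm_apply_apply t
  rcases hpe : pe m t with ⟨k, u⟩
  rw [hpe, pe_symm_apply] at h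
  cases u
  · rw [if_neg (by simp)] at h
    rw [← h]; exact ha k
  · rw [if_pos rfl] at h
    rw [← h]; exact hb k

def notEquiv : Bool ≃ Bool := Function.Involutive.toPerm Bool.not Bool.not_not

def jmap (g0 : Equiv.Perm (Fin (2*m))) (σ : Equiv.Perm (Fin m)) (s : Fin m → Bool) :
    Equiv.Perm (Fin (2*m)) :=
  ((pe m).trans ((Equiv.prodShear σ (fun k => if s k then notEquiv else Equiv.refl Bool)).trans
    (pe m).symm)).trans g0

lemma jmap_pa (g0 : Equiv.Perm (Fin (2*m))) (σ : Equiv.Perm (Fin m)) (s : Fin m → Bool) (k : Fin m) :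
    jmap g0 σ s (pa m k) = g0 (if s k then pb m (σ k) else pa m (σ k)) := by
  simp only [jmap, Equiv.trans_apply, pe_pa, Equiv.prodShear_apply]
  by_cases h : s k
  · simp [h, notEquiv, pe_symm_apply, Function.Involutive.toPerm]
  · simp [h, pe_symm_apply]

lemma jmap_pb (g0 : Equiv.Perm (Fin (2*m))) (σ : Equiv.Perm (Fin m)) (s : Fin m → Bool) (k : Fin m) :
    jmap g0 σ s (pb m k) = g0 (if s k then pa m (σ k) else pb m (σ k)) := by
  simp only [jmap, Equiv.trans_apply, pe_pb, Equiv.prodShear_apply]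
  by_cases h : s k
  · simp [h, notEquiv, pe_symm_apply, Function.Involutive.toPerm]
  · simp [h, pe_symm_apply]

lemma sort_unique {f : Fin m → Fin (2*m)} (hf : Function.Injective f)
    {σ : Equiv.Perm (Fin m)} (h : Monotone (f ∘ σ)) : Tuple.sort f = σ := by
  have := Tuple.unique_monotone (Tuple.monotone_sort f) h
  exact Equiv.ext (fun k => hf (congrFun this k))

lemma pa_injective : Function.Injective (pa m) := by
  intro k l h
  have := congrArg Fin.val h
  simp only [pa] at this
  exact Fin.ext (by omega)

lemma pow_eq_sum_pi {M : ℕ} {β : Type*} [Fintype β] (t : β → ℝ) :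
    (∑ i, t i) ^ M = ∑ g : Fin M → β, ∏ k : Fin M, t (g k) := by
  rw [← Fintype.piFinset_univ, ← Finset.prod_univ_sum]
  rw [Finset.prod_const, Finset.card_univ, Fintype.card_fin]

lemma signSum_of_bij {α : Type*} [Fintype α] {N : ℕ} (hcard : Fintype.card α = N)
    (G : α → Fin N) (h : Function.Bijective G) :
    ∑ ε : Fin N → Bool, (∏ i, sgn (ε i)) * (∏ u : α, sgn (ε (G u))) = (2:ℝ)^N := by
  rw [signSum hcard G, if_pos h]

lemma signSum_of_not_bij {α : Type*} [Fintype α] {N : ℕ} (hcard : Fintype.card α = N)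
    (G : α → Fin N) (h : ¬ Function.Bijective G) :
    ∑ ε : Fin N → Bool, (∏ i, sgn (ε i)) * (∏ u : α, sgn (ε (G u))) = 0 := by
  rw [signSum hcard G, if_neg h]

lemma sum_support_image {γ δ : Type*} [Fintype γ] [Fintype δ] [DecidableEq δ]
    (e : γ → δ) (he : Function.Injective e) (t : δ → ℝ)
    (ht : ∀ d, (∀ c, e c ≠ d) → t d = 0) : ∑ d, t d = ∑ c, t (e c) := by
  rw [← Finset.sum_add_sum_compl (Finset.univ.image e)]
  rw [Finset.sum_image (fun g _ g' _ h => he h)]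
  have hz : ∑ d ∈ (Finset.univ.image e)ᶜ, t d = 0 := by
    refine Finset.sum_eq_zero (fun d hd => ?_)
    refine ht d (fun c hc => ?_)
    simp only [Finset.mem_compl, Finset.mem_image] at hd
    exact hd ⟨c, Finset.mem_univ _, hc⟩
  rw [hz, add_zero]

lemma polarization (n : ℕ) (x : Fin n → ℝ) :
    ∑ ε : Fin n → Bool, (∏ i, sgn (ε i)) * (∑ i, sgn (ε i) * x i) ^ n
      = (2:ℝ)^n * (n.factorial : ℝ) * ∏ i, x i := by
  have step1 : ∀ ε : Fin n → Bool, (∏ i, sgn (ε i)) * (∑ i, sgn (ε i) * x i) ^ n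
      = ∑ f : Fin n → Fin n, (∏ k, x (f k)) * ((∏ i, sgn (ε i)) * ∏ k, sgn (ε (f k))) := by
    intro ε
    rw [pow_eq_sum_pi (fun i => sgn (ε i) * x i), Finset.mul_sum]
    refine Finset.sum_congr rfl (fun f _ => ?_)
    rw [Finset.prod_mul_distrib]
    ring
  calc ∑ ε : Fin n → Bool, (∏ i, sgn (ε i)) * (∑ i, sgn (ε i) * x i) ^ n
      = ∑ ε : Fin n → Bool, ∑ f : Fin n → Fin n,
          (∏ k, x (f k)) * ((∏ i, sgn (ε i)) * ∏ k, sgn (ε (f k))) :=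
        Finset.sum_congr rfl (fun ε _ => step1 ε)
    _ = ∑ f : Fin n → Fin n, (∏ k, x (f k))
          * ∑ ε : Fin n → Bool, (∏ i, sgn (ε i)) * ∏ k, sgn (ε (f k)) := by
        rw [Finset.sum_comm]
        exact Finset.sum_congr rfl (fun f _ => by rw [Finset.mul_sum])
    _ = ∑ g : Equiv.Perm (Fin n), (∏ k, x (g k))
          * ∑ ε : Fin n → Bool, (∏ i, sgn (ε i)) * ∏ k, sgn (ε (g k)) := by
        refine sum_support_image (fun g : Equiv.Perm (Fin n) => ⇑g)
          (fun g g' h => Equiv.coe_fn_injective h) _ (fun f hf => ?_)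
        have hnb : ¬ Function.Bijective f := by
          intro hb
          exact hf (Equiv.ofBijective f hb) rfl
        rw [signSum_of_not_bij (Fintype.card_fin n) f hnb, mul_zero]
    _ = ∑ g : Equiv.Perm (Fin n), (∏ k, x (g k)) * (2:ℝ)^n := by
        refine Finset.sum_congr rfl (fun g _ => ?_)
        rw [signSum_of_bij (Fintype.card_fin n) ⇑g g.bijective]
    _ = (2:ℝ)^n * (n.factorial : ℝ) * ∏ i, x i := by
        have h1 : ∀ g : Equiv.Perm (Fin n), ∏ k, x (g k) = ∏ i, x i :=
          fun g => Equiv.prod_comp g x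
        rw [Finset.sum_congr rfl (fun g _ => by rw [h1 g])]
        rw [Finset.sum_const, Finset.card_univ, Fintype.card_perm, Fintype.card_fin]
        rw [nsmul_eq_mul]
        ring

lemma alg_even (m : ℕ) (c : Fin (2*m) → Fin (2*m) → ℝ) :
    ∑ ε : Fin (2*m) → Bool, (∏ i, sgn (ε i)) * (∑ i, ∑ j, sgn (ε i) * sgn (ε j) * c i j) ^ m
      = (2:ℝ)^(2*m) * ∑ g : Equiv.Perm (Fin (2*m)), ∏ k : Fin m, c (g (pa m k)) (g (pb m k)) := by
  have hcard : Fintype.card (Fin m × Bool) = 2*m := by simp [mul_comm]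
  have step1 : ∀ ε : Fin (2*m) → Bool,
      (∏ i, sgn (ε i)) * (∑ i, ∑ j, sgn (ε i) * sgn (ε j) * c i j) ^ m
      = ∑ f : Fin m → Fin (2*m) × Fin (2*m), (∏ k, c (f k).1 (f k).2)
          * ((∏ i, sgn (ε i)) * ∏ u : Fin m × Bool,
              sgn (ε (if u.2 then (f u.1).2 else (f u.1).1))) := by
    intro ε
    have hin : (∑ p : Fin (2*m) × Fin (2*m), sgn (ε p.1) * sgn (ε p.2) * c p.1 p.2)
        = ∑ i, ∑ j, sgn (ε i) * sgn (ε j) * c i j := by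
      rw [Fintype.sum_prod_type]
    rw [← hin, pow_eq_sum_pi (fun p : Fin (2*m) × Fin (2*m) => sgn (ε p.1) * sgn (ε p.2) * c p.1 p.2),
      Finset.mul_sum]
    refine Finset.sum_congr rfl (fun f _ => ?_)
    have hbool : (∏ u : Fin m × Bool, sgn (ε (if u.2 then (f u.1).2 else (f u.1).1)))
        = ∏ k : Fin m, (sgn (ε (f k).1) * sgn (ε (f k).2)) := by
      rw [Fintype.prod_prod_type]
      refine Finset.prod_congr rfl (fun k _ => ?_)
      rw [Fintype.prod_bool]
      simp [mul_comm]
    rw [hbool]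
    rw [show (∏ k : Fin m, (sgn (ε (f k).1) * sgn (ε (f k).2) * c (f k).1 (f k).2))
        = (∏ k, c (f k).1 (f k).2) * ∏ k, (sgn (ε (f k).1) * sgn (ε (f k).2)) by
      rw [← Finset.prod_mul_distrib]; exact Finset.prod_congr rfl (fun k _ => by ring)]
    ring
  calc ∑ ε : Fin (2*m) → Bool, (∏ i, sgn (ε i)) * (∑ i, ∑ j, sgn (ε i) * sgn (ε j) * c i j) ^ m
      = ∑ ε : Fin (2*m) → Bool, ∑ f : Fin m → Fin (2*m) × Fin (2*m),
          (∏ k, c (f k).1 (f k).2) * ((∏ i, sgn (ε i)) * ∏ u : Fin m × Bool,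
              sgn (ε (if u.2 then (f u.1).2 else (f u.1).1))) :=
        Finset.sum_congr rfl (fun ε _ => step1 ε)
    _ = ∑ f : Fin m → Fin (2*m) × Fin (2*m), (∏ k, c (f k).1 (f k).2)
          * ∑ ε : Fin (2*m) → Bool, ((∏ i, sgn (ε i)) * ∏ u : Fin m × Bool,
              sgn (ε (if u.2 then (f u.1).2 else (f u.1).1))) := by
        rw [Finset.sum_comm]
        exact Finset.sum_congr rfl (fun f _ => by rw [Finset.mul_sum])
    _ = ∑ g : Equiv.Perm (Fin (2*m)), (∏ k : Fin m, c (g (pa m k)) (g (pb m k)))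
          * ∑ ε : Fin (2*m) → Bool, ((∏ i, sgn (ε i)) * ∏ u : Fin m × Bool,
              sgn (ε (if u.2 then (g (pb m u.1)) else (g (pa m u.1))))) := by
        refine sum_support_image
          (fun g : Equiv.Perm (Fin (2*m)) => fun k => (g (pa m k), g (pb m k)))
          (fun g g' h => ?_) _ (fun f hf => ?_)
        · refine perm_ext_ab (fun k => ?_) (fun k => ?_)
          · exact congrArg Prod.fst (congrFun h k)
          · exact congrArg Prod.snd (congrFun h k)
        · have hnb : ¬ Function.Bijective
              (fun u : Fin m × Bool => if u.2 then (f u.1).2 else (f u.1).1) := by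
            intro hb
            set G := fun u : Fin m × Bool => if u.2 then (f u.1).2 else (f u.1).1 with hG
            refine hf (Equiv.ofBijective (fun t => G (pe m t)) (hb.comp (pe m).bijective)) ?_
            funext k
            refine Prod.ext ?_ ?_
            · show G (pe m (pa m k)) = (f k).1
              rw [pe_pa, hG]; simp
            · show G (pe m (pb m k)) = (f k).2
              rw [pe_pb, hG]; simp
          rw [signSum_of_not_bij hcard _ hnb, mul_zero]
    _ = ∑ g : Equiv.Perm (Fin (2*m)), (∏ k : Fin m, c (g (pa m k)) (g (pb m k))) * (2:ℝ)^(2*m) := by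
        refine Finset.sum_congr rfl (fun g _ => ?_)
        congr 1
        refine signSum_of_bij hcard (fun u : Fin m × Bool => if u.2 then g (pb m u.1) else g (pa m u.1)) ?_
        have hfun : (fun u : Fin m × Bool => if u.2 then g (pb m u.1) else g (pa m u.1))
            = fun u : Fin m × Bool => g ((pe m).symm u) := by
          funext u
          rcases u with ⟨k, t⟩
          cases t <;> simp [pe_symm_apply]
        rw [hfun]
        exact g.bijective.comp (pe m).symm.bijective
    _ = (2:ℝ)^(2*m) * ∑ g : Equiv.Perm (Fin (2*m)), ∏ k : Fin m, c (g (pa m k)) (g (pb m k)) := by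
        rw [Finset.mul_sum]
        exact Finset.sum_congr rfl (fun g _ => by ring)

def Amin (g : Equiv.Perm (Fin (2*m))) (k : Fin m) : Fin (2*m) := min (g (pa m k)) (g (pb m k))
def Bmax (g : Equiv.Perm (Fin (2*m))) (k : Fin m) : Fin (2*m) := max (g (pa m k)) (g (pb m k))
def swp (g : Equiv.Perm (Fin (2*m))) (k : Fin m) : Bool := decide (g (pb m k) < g (pa m k))
def spq (g : Equiv.Perm (Fin (2*m))) : Equiv.Perm (Fin m) := Tuple.sort (Amin g)
def nrm (g : Equiv.Perm (Fin (2*m))) : Equiv.Perm (Fin (2*m)) :=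
  jmap g (spq g) (fun k => swp g (spq g k))

lemma pa_ne_pb (k l : Fin m) : pa m k ≠ pb m l := by
  intro h
  have := congrArg Fin.val h
  simp only [pa, pb] at this
  omega

lemma nrm_pa (g : Equiv.Perm (Fin (2*m))) (k : Fin m) : nrm g (pa m k) = Amin g (spq g k) := by
  rw [nrm, jmap_pa]
  by_cases h : swp g (spq g k)
  · rw [if_pos h]
    simp only [swp, decide_eq_true_eq] at h
    rw [Amin]
    exact (min_eq_right h.le).symm
  · rw [if_neg h]
    simp only [swp, decide_eq_true_eq] at h
    rw [Amin]
    exact (min_eq_left (not_lt.mp h)).symm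

lemma nrm_pb (g : Equiv.Perm (Fin (2*m))) (k : Fin m) : nrm g (pb m k) = Bmax g (spq g k) := by
  rw [nrm, jmap_pb]
  by_cases h : swp g (spq g k)
  · rw [if_pos h]
    simp only [swp, decide_eq_true_eq] at h
    rw [Bmax]
    exact (max_eq_left h.le).symm
  · rw [if_neg h]
    simp only [swp, decide_eq_true_eq] at h
    rw [Bmax]
    exact (max_eq_right (not_lt.mp h)).symm

lemma Amin_inj (g : Equiv.Perm (Fin (2*m))) : Function.Injective (Amin g) := by
  intro k l h
  rcases min_choice (g (pa m k)) (g (pb m k)) with h1 | h1 <;>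
    rcases min_choice (g (pa m l)) (g (pb m l)) with h2 | h2 <;>
    · have h1' : Amin g k = _ := h1
      have h2' : Amin g l = _ := h2
      have hu := g.injective (h1'.symm.trans (h.trans h2'))
      have hv := congrArg Fin.val hu
      simp only [pa, pb] at hv
      exact Fin.ext (by omega)

lemma group_lemma (m : ℕ) (c : Fin (2*m) → Fin (2*m) → ℝ) (hsym : ∀ i j, c i j = c j i) :
    ∑ g : Equiv.Perm (Fin (2*m)), ∏ k : Fin m, c (g (pa m k)) (g (pb m k))
      = ((m.factorial : ℝ) * 2^m) * ∑ g ∈ Finset.univ.filter (fun g : Equiv.Perm (Fin (2*m)) =>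
          (∀ k : Fin m, g (pa m k) < g (pb m k)) ∧
          (∀ k l : Fin m, k < l → g (pa m k) < g (pa m l))),
          ∏ k : Fin m, c (g (pa m k)) (g (pb m k)) := by
  classical
  set Ca : Equiv.Perm (Fin (2*m)) → Prop := fun g =>
    (∀ k : Fin m, g (pa m k) < g (pb m k)) ∧
    (∀ k l : Fin m, k < l → g (pa m k) < g (pa m l)) with hCa_def
  have main : ∑ g : Equiv.Perm (Fin (2*m)), ∏ k : Fin m, c (g (pa m k)) (g (pb m k))
      = ∑ p ∈ (Finset.univ.filter Ca) ×ˢ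
          (Finset.univ : Finset (Equiv.Perm (Fin m) × (Fin m → Bool))),
          ∏ k : Fin m, c (p.1 (pa m k)) (p.1 (pb m k)) := by
    refine Finset.sum_bij' (fun g _ => (nrm g, ((spq g)⁻¹, fun k => swp g k)))
      (fun p _ => jmap p.1 p.2.1 p.2.2) ?_ ?_ ?_ ?_ ?_
    · -- hi : image in product
      intro g _
      refine Finset.mem_product.mpr ⟨Finset.mem_filter.mpr ⟨Finset.mem_univ _, ?_, ?_⟩,
        Finset.mem_univ _⟩
      · intro k
        rw [nrm_pa, nrm_pb]
        exact min_lt_max.mpr (g.injective.ne (pa_ne_pb _ _))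
      · intro k l hkl
        rw [nrm_pa, nrm_pa]
        have hsm : StrictMono (Amin g ∘ (spq g)) :=
          (Tuple.monotone_sort (Amin g)).strictMono_of_injective
            ((Amin_inj g).comp (spq g).injective)
        exact hsm hkl
    · intro p _
      exact Finset.mem_univ _
    · -- left inverse : jmap (nrm g) (spq g)⁻¹ (swp g) = g
      intro g _
      refine perm_ext_ab (fun k => ?_) (fun k => ?_)
      · rw [jmap_pa]
        by_cases h : swp g k
        · rw [if_pos h, nrm_pb, Equiv.Perm.apply_inv_self]
          simp only [swp, decide_eq_true_eq] at h
          rw [Bmax]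
          exact max_eq_left h.le
        · rw [if_neg h, nrm_pa, Equiv.Perm.apply_inv_self]
          simp only [swp, decide_eq_true_eq] at h
          rw [Amin]
          exact min_eq_left (not_lt.mp h)
      · rw [jmap_pb]
        by_cases h : swp g k
        · rw [if_pos h, nrm_pa, Equiv.Perm.apply_inv_self]
          simp only [swp, decide_eq_true_eq] at h
          rw [Amin]
          exact min_eq_right h.le
        · rw [if_neg h, nrm_pb, Equiv.Perm.apply_inv_self]
          simp only [swp, decide_eq_true_eq] at h
          rw [Bmax]
          exact max_eq_right (not_lt.mp h)
    · -- right inverse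
      intro p hp
      rcases p with ⟨g0, σ, s⟩
      have hCa : Ca g0 := (Finset.mem_filter.mp (Finset.mem_product.mp hp).1).2
      set g' := jmap g0 σ s with hg'
      have hga : ∀ k, g' (pa m k) = g0 (if s k then pb m (σ k) else pa m (σ k)) :=
        fun k => jmap_pa g0 σ s k
      have hgb : ∀ k, g' (pb m k) = g0 (if s k then pa m (σ k) else pb m (σ k)) :=
        fun k => jmap_pb g0 σ s k
      have hsw : ∀ k, swp g' k = s k := by
        intro k
        rw [swp, hga k, hgb k]
        cases hs : s k
        · simp only [Bool.false_eq_true, if_false]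
          exact decide_eq_false (not_lt.mpr (hCa.1 (σ k)).le)
        · simp only [if_true]
          exact decide_eq_true (hCa.1 (σ k))
      have hA : ∀ k, Amin g' k = g0 (pa m (σ k)) := by
        intro k
        rw [Amin, hga k, hgb k]
        cases hs : s k
        · simp only [Bool.false_eq_true, if_false]
          exact min_eq_left (hCa.1 (σ k)).le
        · simp only [if_true]
          exact min_eq_right (hCa.1 (σ k)).le
      have hB : ∀ k, Bmax g' k = g0 (pb m (σ k)) := by
        intro k
        rw [Bmax, hga k, hgb k]
        cases hs : s k
        · simp only [Bool.false_eq_true, if_false]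
          exact max_eq_right (hCa.1 (σ k)).le
        · simp only [if_true]
          exact max_eq_left (hCa.1 (σ k)).le
      have hAfun : Amin g' = fun k => g0 (pa m (σ k)) := funext hA
      have hsp : spq g' = σ⁻¹ := by
        rw [spq, hAfun]
        refine sort_unique ?_ ?_
        · exact fun k l h => σ.injective (pa_injective (g0.injective h))
        · intro k l hkl
          show g0 (pa m (σ (σ⁻¹ k))) ≤ g0 (pa m (σ (σ⁻¹ l)))
          rw [Equiv.Perm.apply_inv_self, Equiv.Perm.apply_inv_self]
          rcases lt_or_eq_of_le hkl with h | h
          · exact (hCa.2 k l h).le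
          · rw [h]
      have hnrm : nrm g' = g0 := by
        refine perm_ext_ab (fun k => ?_) (fun k => ?_)
        · rw [nrm_pa, hsp, hA, Equiv.Perm.apply_inv_self]
        · rw [nrm_pb, hsp, hB, Equiv.Perm.apply_inv_self]
      refine Prod.ext ?_ (Prod.ext ?_ ?_)
      · exact hnrm
      · show (spq g')⁻¹ = σ
        rw [hsp]
        exact inv_inv σ
      · show (fun k => swp g' k) = s
        exact funext hsw
    · -- values
      intro g _
      have h1 : ∀ k, c (nrm g (pa m k)) (nrm g (pb m k))
          = c (Amin g (spq g k)) (Bmax g (spq g k)) := by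
        intro k
        rw [nrm_pa, nrm_pb]
      have h2 : ∀ k, c (Amin g k) (Bmax g k) = c (g (pa m k)) (g (pb m k)) := by
        intro k
        rw [Amin, Bmax]
        by_cases h : g (pb m k) < g (pa m k)
        · rw [min_eq_right h.le, max_eq_left h.le]
          exact hsym _ _
        · rw [min_eq_left (not_lt.mp h), max_eq_right (not_lt.mp h)]
      calc ∏ k : Fin m, c (g (pa m k)) (g (pb m k))
          = ∏ k : Fin m, c (Amin g k) (Bmax g k) :=
            (Finset.prod_congr rfl (fun k _ => h2 k)).symm
        _ = ∏ k : Fin m, c (Amin g (spq g k)) (Bmax g (spq g k)) :=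
            (Equiv.prod_comp (spq g) (fun k => c (Amin g k) (Bmax g k))).symm
        _ = ∏ k : Fin m, c (nrm g (pa m k)) (nrm g (pb m k)) :=
            (Finset.prod_congr rfl (fun k _ => h1 k)).symm
  rw [main, Finset.sum_product]
  have hconst : ∀ g0 : Equiv.Perm (Fin (2*m)),
      ∑ _q : Equiv.Perm (Fin m) × (Fin m → Bool),
        (∏ k : Fin m, c (g0 (pa m k)) (g0 (pb m k)))
      = ((m.factorial : ℝ) * 2^m) * ∏ k : Fin m, c (g0 (pa m k)) (g0 (pb m k)) := by
    intro g0
    rw [Finset.sum_const, Finset.card_univ, nsmul_eq_mul]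
    congr 1
    simp [Fintype.card_perm]
  rw [Finset.sum_congr rfl (fun g0 _ => hconst g0), ← Finset.mul_sum]

end WickAux

open WickAux in
/-- Wick's theorem (Isserlis): for a centered jointly Gaussian random
vector `(X_1,…,X_n)`, if `n` is odd then `E[X_1⋯X_n] = 0`, and if `n = 2m` then
`E[X_1⋯X_{2m}] = Σ_π ∏_{i=1}^m E[X_{π(2i−1)} X_{π(2i)}]`, the sum running over all
pairings `π`, i.e. permutations of `{1,…,2m}` with `π(2i−1) < π(2i)` for all `i` and
`π(1) < π(3) < ⋯ < π(2m−1)`. -/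
theorem wick_isserlis
    {Ω : Type} [MeasurableSpace Ω] (P : Measure Ω) [IsProbabilityMeasure P]
    (n : ℕ) (X : Fin n → Ω → ℝ)
    (hmeas : ∀ i, Measurable (X i))
    (hgauss : ∀ a : Fin n → ℝ, ∃ v : NNReal,
      Measure.map (fun ω => ∑ i, a i * X i ω) P = gaussianReal 0 v) :
    (Odd n → ∫ ω, ∏ i, X i ω ∂P = 0) ∧
    (∀ m : ℕ, (hm : n = 2 * m) →
      ∫ ω, ∏ i, X i ω ∂P
        = ∑ π ∈ Finset.univ.filter (fun π : Equiv.Perm (Fin n) =>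
            (∀ i : Fin m, π ⟨2 * i, by omega⟩ < π ⟨2 * i + 1, by omega⟩) ∧
            (∀ i j : Fin m, i < j → π ⟨2 * i, by omega⟩ < π ⟨2 * j, by omega⟩)),
            ∏ i : Fin m,
              ∫ ω, X (π ⟨2 * i, by omega⟩) ω * X (π ⟨2 * i + 1, by omega⟩) ω ∂P) := by
  have hYmeas : ∀ a : Fin n → ℝ, Measurable (fun ω => ∑ i, a i * X i ω) := fun a =>
    Finset.measurable_sum _ (fun i _ => (hmeas i).const_mul (a i))
  have key : ∀ a : Fin n → ℝ, ∀ k : ℕ,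
      Integrable (fun ω => (∑ i, a i * X i ω)^k) P ∧
      ∫ ω, (∑ i, a i * X i ω)^k ∂P = Mom k (hgauss a).choose := by
    intro a k
    have hmap := (hgauss a).choose_spec
    constructor
    · have h1 := integrable_pow_gaussianReal (hgauss a).choose k
      rw [← hmap] at h1
      have h2 := (integrable_map_measure (measurable_id.pow_const k).aestronglyMeasurable
        (hYmeas a).aemeasurable).mp h1
      exact h2
    · have hmf : AEStronglyMeasurable (fun x : ℝ => x ^ k)
          (Measure.map (fun ω => ∑ i, a i * X i ω) P) :=
        (measurable_id.pow_const k).aestronglyMeasurable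
      rw [Mom, ← hmap, integral_map (hYmeas a).aemeasurable hmf]
  have hXpow : ∀ (i : Fin n) (k : ℕ), Integrable (fun ω => (X i ω)^k) P := by
    intro i k
    have h := (key (Pi.single i 1) k).1
    have hsum : ∀ ω, (∑ j, (Pi.single i 1 : Fin n → ℝ) j * X j ω) = X i ω := by
      intro ω
      rw [Finset.sum_eq_single i]
      · simp
      · intro j _ hj
        simp [Pi.single_apply, hj]
      · intro h
        exact absurd (Finset.mem_univ i) h
    refine h.congr (Filter.Eventually.of_forall (fun ω => ?_))
    show (∑ j, (Pi.single i 1 : Fin n → ℝ) j * X j ω)^k = X i ω ^ k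
    rw [hsum]
  have hXint : ∀ i j : Fin n, Integrable (fun ω => X i ω * X j ω) P := by
    intro i j
    refine ((hXpow i 2).add (hXpow j 2)).mono'
      ((hmeas i).mul (hmeas j)).aestronglyMeasurable
      (Filter.Eventually.of_forall (fun ω => ?_))
    have h : |X i ω| * |X j ω| ≤ (X i ω)^2 + (X j ω)^2 := by
      nlinarith [sq_nonneg (|X i ω| - |X j ω|), sq_abs (X i ω), sq_abs (X j ω),
        abs_nonneg (X i ω), abs_nonneg (X j ω)]
    simpa [Real.norm_eq_abs] using h
  have hvar : ∀ a : Fin n → ℝ, (((hgauss a).choose : NNReal) : ℝ)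
      = ∑ i, ∑ j, a i * a j * ∫ ω, X i ω * X j ω ∂P := by
    intro a
    have h2 := (key a 2).2
    rw [Mom_two] at h2
    rw [← h2]
    have hsq : (fun ω => (∑ i, a i * X i ω)^2)
        = fun ω => ∑ i, ∑ j, (a i * a j) * (X i ω * X j ω) := by
      funext ω
      rw [sq, Finset.sum_mul_sum]
      exact Finset.sum_congr rfl fun i _ => Finset.sum_congr rfl fun j _ => by ring
    rw [hsq,
      integral_finset_sum _ (fun i _ => integrable_finset_sum _ (fun j _ => (hXint i j).const_mul _))]
    refine Finset.sum_congr rfl (fun i _ => ?_)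
    rw [integral_finset_sum _ (fun j _ => (hXint i j).const_mul _)]
    refine Finset.sum_congr rfl (fun j _ => ?_)
    rw [integral_const_mul]
  have master : ((2:ℝ)^n * (n.factorial : ℝ)) * ∫ ω, ∏ i, X i ω ∂P
      = ∑ ε : Fin n → Bool, (∏ i, sgn (ε i)) * Mom n (hgauss (fun i => sgn (ε i))).choose := by
    calc ((2:ℝ)^n * (n.factorial : ℝ)) * ∫ ω, ∏ i, X i ω ∂P
        = ∫ ω, ((2:ℝ)^n * (n.factorial : ℝ)) * ∏ i, X i ω ∂P := (integral_const_mul _ _).symm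
      _ = ∫ ω, ∑ ε : Fin n → Bool, (∏ i, sgn (ε i)) * (∑ i, sgn (ε i) * X i ω)^n ∂P := by
          refine integral_congr_ae (Filter.Eventually.of_forall (fun ω => ?_))
          exact (polarization n (fun i => X i ω)).symm
      _ = ∑ ε : Fin n → Bool, ∫ ω, (∏ i, sgn (ε i)) * (∑ i, sgn (ε i) * X i ω)^n ∂P :=
          integral_finset_sum _ (fun ε _ => ((key (fun i => sgn (ε i)) n).1.const_mul _))
      _ = ∑ ε : Fin n → Bool, (∏ i, sgn (ε i)) * Mom n (hgauss (fun i => sgn (ε i))).choose := by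
          refine Finset.sum_congr rfl (fun ε _ => ?_)
          rw [integral_const_mul, (key (fun i => sgn (ε i)) n).2]
  constructor
  · -- odd case
    intro hodd
    have hz : ∀ ε : Fin n → Bool, (∏ i, sgn (ε i)) * Mom n (hgauss (fun i => sgn (ε i))).choose = 0 := by
      intro ε
      rw [Mom_odd _ hodd, mul_zero]
    rw [Finset.sum_congr rfl (fun ε _ => hz ε), Finset.sum_const_zero] at master
    have hne : ((2:ℝ)^n * (n.factorial : ℝ)) ≠ 0 := by positivity
    exact (mul_eq_zero.mp master).resolve_left hne
  · -- even case
    intro m hm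
    subst hm
    have halg := alg_even m (fun i j => ∫ ω, X i ω * X j ω ∂P)
    have hgrp := group_lemma m (fun i j => ∫ ω, X i ω * X j ω ∂P)
      (fun i j => integral_congr_ae (Filter.Eventually.of_forall (fun ω => mul_comm _ _)))
    have h1 : ∑ ε : Fin (2*m) → Bool,
        (∏ i, sgn (ε i)) * Mom (2*m) (hgauss (fun i => sgn (ε i))).choose
        = Mom (2*m) 1 * ∑ ε : Fin (2*m) → Bool, (∏ i, sgn (ε i))
            * (∑ i, ∑ j, sgn (ε i) * sgn (ε j) * ∫ ω, X i ω * X j ω ∂P)^m := by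
      rw [Finset.mul_sum]
      refine Finset.sum_congr rfl (fun ε _ => ?_)
      rw [Mom_even, hvar (fun i => sgn (ε i))]
      ring
    rw [h1, halg, hgrp] at master
    have hMf := Mom_fact m
    have hne : ((2:ℝ)^(2*m) * ((2*m).factorial : ℝ)) ≠ 0 := by positivity
    refine mul_left_cancel₀ hne ?_
    show ((2:ℝ)^(2*m) * ((2*m).factorial : ℝ)) * ∫ ω, ∏ i, X i ω ∂P
      = ((2:ℝ)^(2*m) * ((2*m).factorial : ℝ)) * ∑ g ∈ Finset.univ.filter
          (fun g : Equiv.Perm (Fin (2*m)) =>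
            (∀ k : Fin m, g (pa m k) < g (pb m k)) ∧
            (∀ k l : Fin m, k < l → g (pa m k) < g (pa m l))),
          ∏ k : Fin m, ∫ ω, X (g (pa m k)) ω * X (g (pb m k)) ω ∂P
    rw [master, ← hMf]
    ring
end
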